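/- arXiv:1202.5728 — 3 statements merged into one kernel-verified Lean document; each statement's English description precedes it below -/
import Mathlib

section
/- Fix α > −1. Let f ∈ L²((0,∞), μ_α) and, for β > 0, define f_β(x) = f((β/2)(1−x))·1_{[−1,1]}(x). Then f_β ∈ L²((−1,1), μ_{α,β}) and lim_{β→∞} ‖f_β‖_{L²(μ_{α,β})} = ‖f‖_{L²(μ_α)}. -/
open MeasureTheory Filter Real
open scoped ENNReal NNReal

noncomputable section

/-- Jacobi polynomial `P_n^{(a,b)}` in Szegő's normalization. -/
def jacobiP (a b : ℝ) (n : ℕ) (x : ℝ) : ℝ :=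
  ∑ ν ∈ Finset.range (n + 1),
    (Real.Gamma (n + a + 1) / (Real.Gamma (a + ν + 1) * (Nat.factorial (n - ν)))) *
    (Real.Gamma (n + b + 1) / (Real.Gamma (n + b - ν + 1) * (Nat.factorial ν))) *
    ((x - 1) / 2) ^ ν * ((x + 1) / 2) ^ (n - ν)

/-- Jacobi (beta) measure on `(-1,1)`. -/
def jacobiMeasure (a b : ℝ) : Measure ℝ :=
  (volume.restrict (Set.Ioo (-1 : ℝ) 1)).withDensity fun x =>
    ENNReal.ofReal ((1 - x) ^ a * (1 + x) ^ b *
      (Real.Gamma (a + b + 2) / (2 ^ (a + b + 1) * Real.Gamma (a + 1) * Real.Gamma (b + 1))))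

/-- Gegenbauer polynomial `C_n^l`. -/
def gegenbauerC (l : ℝ) (n : ℕ) (x : ℝ) : ℝ :=
  (Real.Gamma (l + 1 / 2) * Real.Gamma (n + 2 * l)) /
    (Real.Gamma (2 * l) * Real.Gamma (n + l + 1 / 2)) *
    jacobiP (l - 1 / 2) (l - 1 / 2) n x

/-- Gegenbauer measure on `(-1,1)`. -/
def gegenbauerMeasure (l : ℝ) : Measure ℝ := jacobiMeasure (l - 1 / 2) (l - 1 / 2)

/-- Gaussian measure `γ` on `ℝ`. -/
def gaussMeasure : Measure ℝ :=
  volume.withDensity fun x => ENNReal.ofReal (Real.exp (-x ^ 2) / Real.sqrt Real.pi)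

/-- Physicists' Hermite polynomial `H_n`. -/
def hermiteH : ℕ → ℝ → ℝ
  | 0, _ => 1
  | 1, x => 2 * x
  | n + 2, x => 2 * x * hermiteH (n + 1) x - 2 * (n + 1) * hermiteH n x

/-- Laguerre polynomial `L_n^a` in Szegő's normalization. -/
def laguerreL (a : ℝ) (n : ℕ) (x : ℝ) : ℝ :=
  ∑ m ∈ Finset.range (n + 1),
    (-1 : ℝ) ^ m * (Real.Gamma (n + a + 1) /
      ((Nat.factorial (n - m)) * Real.Gamma (a + m + 1) * (Nat.factorial m))) * x ^ m

/-- Gamma measure `μ_a` on `(0,∞)`. -/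
def gammaMeasure (a : ℝ) : Measure ℝ :=
  (volume.restrict (Set.Ioi (0 : ℝ))).withDensity fun x =>
    ENNReal.ofReal (x ^ a * Real.exp (-x) / Real.Gamma (a + 1))

/-- Partial sums of the Jacobi–Riesz transform series of `f`. -/
def jacobiRieszPartial (a b : ℝ) (f : ℝ → ℝ) (N : ℕ) (x : ℝ) : ℝ :=
  ∑ k ∈ Finset.Icc 1 N,
    ((∫ y, f y * jacobiP a b k y ∂jacobiMeasure a b) /
        (∫ y, (jacobiP a b k y) ^ 2 ∂jacobiMeasure a b)) *
      (((k : ℝ) + a + b + 1) / 2) / Real.sqrt ((k : ℝ) * ((k : ℝ) + a + b + 1)) *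
      Real.sqrt (1 - x ^ 2) * jacobiP (a + 1) (b + 1) (k - 1) x

/-- `g` is the Jacobi–Riesz transform of `f` (as an `L²(μ_{a,b})` limit of partial sums). -/
def IsJacobiRiesz (a b : ℝ) (f g : ℝ → ℝ) : Prop :=
  Tendsto (fun N => eLpNorm (fun x => jacobiRieszPartial a b f N x - g x) 2 (jacobiMeasure a b))
    atTop (nhds 0)

/-- Partial sums of the Gegenbauer–Riesz transform series of `f`. -/
def gegenbauerRieszPartial (l : ℝ) (f : ℝ → ℝ) (N : ℕ) (x : ℝ) : ℝ :=
  (1 / 2) * ∑ k ∈ Finset.Icc 1 N,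
    (∫ y, f y * gegenbauerC l k y ∂gegenbauerMeasure l) *
      (4 * Real.Gamma (2 * l) * ((k : ℝ) + l) * Nat.factorial k / Real.Gamma (k + 2 * l + 1)) *
      Real.sqrt (((k : ℝ) + 2 * l) / k) * Real.sqrt (1 - x ^ 2) * gegenbauerC (l + 1) (k - 1) x

/-- `g` is the Gegenbauer–Riesz transform of `f` (as an `L²(μ_l)` limit of partial sums). -/
def IsGegenbauerRiesz (l : ℝ) (f g : ℝ → ℝ) : Prop :=
  Tendsto (fun N => eLpNorm (fun x => gegenbauerRieszPartial l f N x - g x) 2 (gegenbauerMeasure l))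
    atTop (nhds 0)

/-- Partial sums of the Gaussian–Riesz transform series of `f`. -/
def gaussRieszPartial (f : ℝ → ℝ) (N : ℕ) (x : ℝ) : ℝ :=
  ∑ k ∈ Finset.Icc 1 N,
    ((∫ y, f y * hermiteH k y ∂gaussMeasure) / (2 ^ k * Nat.factorial k)) *
      Real.sqrt (2 * k) * hermiteH (k - 1) x

/-- `g` is the Gaussian–Riesz transform of `f` (as an `L²(γ)` limit of partial sums). -/
def IsGaussRiesz (f g : ℝ → ℝ) : Prop :=
  Tendsto (fun N => eLpNorm (fun x => gaussRieszPartial f N x - g x) 2 gaussMeasure)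
    atTop (nhds 0)

/-- Partial sums of the Laguerre–Riesz transform series of `f`. -/
def laguerreRieszPartial (a : ℝ) (f : ℝ → ℝ) (N : ℕ) (x : ℝ) : ℝ :=
  -∑ k ∈ Finset.Icc 1 N,
    (Real.Gamma (a + 1) * Nat.factorial k / Real.Gamma (k + a + 1)) *
      ((∫ y, f y * laguerreL a k y ∂gammaMeasure a) / Real.sqrt k) *
      Real.sqrt x * laguerreL (a + 1) (k - 1) x

/-- `g` is the Laguerre–Riesz transform of `f` (as an `L²(μ_a)` limit of partial sums). -/
def IsLaguerreRiesz (a : ℝ) (f g : ℝ → ℝ) : Prop :=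
  Tendsto (fun N => eLpNorm (fun x => laguerreRieszPartial a f N x - g x) 2 (gammaMeasure a))
    atTop (nhds 0)

section AuxRiesz

open Topology

private lemma my_div_tendsto (s : ℝ) : Tendsto (fun x : ℝ => x / (x + s)) atTop (𝓝 1) := by
  have h0 : Tendsto (fun x : ℝ => 1 + s / x) atTop (𝓝 1) := by
    simpa using tendsto_const_nhds.add (Tendsto.div_atTop (tendsto_const_nhds (x := s)) tendsto_id)
  have h1 : Tendsto (fun x : ℝ => (1 + s / x)⁻¹) atTop (𝓝 1) := by
    simpa using h0.inv₀ one_ne_zero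
  refine h1.congr' ?_
  filter_upwards [eventually_gt_atTop (max 0 (-s)), eventually_gt_atTop 0] with x hx hx0
  have hxs : 0 < x + s := by
    have := lt_of_le_of_lt (le_max_right 0 (-s)) hx; linarith
  field_simp

private lemma wendel_base {s : ℝ} (hs : 0 < s) (hs1 : s < 1) :
    Tendsto (fun x : ℝ => Real.Gamma (x + s) / (Real.Gamma x * x ^ s)) atTop (𝓝 1) := by
  have h1s : 0 < 1 - s := by linarith
  have hlow : Tendsto (fun x : ℝ => (x / (x + s)) ^ (1 - s)) atTop (𝓝 1) := by
    have := (my_div_tendsto s).rpow_const (p := 1 - s) (Or.inl one_ne_zero)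
    simpa using this
  refine tendsto_of_tendsto_of_tendsto_of_le_of_le' hlow tendsto_const_nhds ?_ ?_
  · -- lower bound
    filter_upwards [eventually_gt_atTop 0] with x hx
    have hxs : 0 < x + s := by linarith
    have hΓx : 0 < Real.Gamma x := Real.Gamma_pos_of_pos hx
    have hΓxs : 0 < Real.Gamma (x + s) := Real.Gamma_pos_of_pos (by linarith)
    have key := Real.Gamma_mul_add_mul_le_rpow_Gamma_mul_rpow_Gamma hxs
      (by linarith : (0:ℝ) < x + s + 1) hs h1s (by ring)
    have harg : s * (x + s) + (1 - s) * (x + s + 1) = x + 1 := by ring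
    rw [harg] at key
    rw [Real.Gamma_add_one hx.ne', show x + s + 1 = (x + s) + 1 by ring,
      Real.Gamma_add_one hxs.ne'] at key
    have hrw : Real.Gamma (x+s) ^ s * ((x+s) * Real.Gamma (x+s)) ^ (1-s)
        = Real.Gamma (x+s) * (x+s) ^ (1-s) := by
      rw [Real.mul_rpow hxs.le hΓxs.le,
        show Real.Gamma (x+s) ^ s * ((x+s)^(1-s) * Real.Gamma (x+s) ^ (1-s))
          = (x+s)^(1-s) * (Real.Gamma (x+s) ^ s * Real.Gamma (x+s) ^ (1-s)) from by ring,
        ← Real.rpow_add hΓxs]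
      norm_num
      ring
    rw [hrw] at key
    rw [Real.div_rpow hx.le hxs.le, div_le_div_iff₀ (by positivity) (by positivity)]
    have hxx : x ^ (1-s) * (Real.Gamma x * x ^ s) = x * Real.Gamma x := by
      rw [mul_comm (Real.Gamma x), ← mul_assoc, ← Real.rpow_add hx]
      norm_num
    rw [hxx]
    linarith [key]
  · -- upper bound
    filter_upwards [eventually_gt_atTop 0] with x hx
    have hΓx : 0 < Real.Gamma x := Real.Gamma_pos_of_pos hx
    have key := Real.Gamma_mul_add_mul_le_rpow_Gamma_mul_rpow_Gamma hx
      (by linarith : (0:ℝ) < x + 1) h1s hs (by ring)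
    have harg : (1-s) * x + s * (x + 1) = x + s := by ring
    rw [harg, Real.Gamma_add_one hx.ne'] at key
    have hrw : Real.Gamma x ^ (1-s) * (x * Real.Gamma x) ^ s = Real.Gamma x * x ^ s := by
      rw [Real.mul_rpow hx.le hΓx.le,
        show Real.Gamma x ^ (1-s) * (x ^ s * Real.Gamma x ^ s)
          = x ^ s * (Real.Gamma x ^ (1-s) * Real.Gamma x ^ s) from by ring,
        ← Real.rpow_add hΓx]
      norm_num
      ring
    rw [hrw] at key
    exact div_le_one_of_le₀ key (by positivity)

private lemma wendel_aux : ∀ n : ℕ, ∀ s : ℝ, 0 < s → s ≤ n + 1 →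
    Tendsto (fun x : ℝ => Real.Gamma (x + s) / (Real.Gamma x * x ^ s)) atTop (𝓝 1) := by
  intro n
  induction n with
  | zero =>
    intro s hs hle
    rcases eq_or_lt_of_le hle with h | h
    · have h1 : s = 1 := by simpa using h
      subst h1
      refine tendsto_const_nhds.congr' ?_
      filter_upwards [eventually_gt_atTop 0] with x hx
      rw [Real.rpow_one, Real.Gamma_add_one hx.ne']
      field_simp [(Real.Gamma_pos_of_pos hx).ne', hx.ne']
    · exact wendel_base hs (by simpa using h)
  | succ n ih =>
    intro s hs hle
    rcases le_or_gt s (n + 1) with h | h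
    · exact ih s hs h
    · have hn0 : (0:ℝ) ≤ n := Nat.cast_nonneg n
      have hs1 : 0 < s - 1 := by linarith
      have IH := ih (s - 1) hs1 (by push_cast at hle ⊢; linarith)
      have hfac : Tendsto (fun x : ℝ => (x + (s - 1)) / x) atTop (𝓝 1) := by
        have h0 : Tendsto (fun x : ℝ => 1 + (s-1) / x) atTop (𝓝 1) := by
          simpa using tendsto_const_nhds.add
            (Tendsto.div_atTop (tendsto_const_nhds (x := s-1)) tendsto_id)
        refine h0.congr' ?_
        filter_upwards [eventually_gt_atTop 0] with x hx
        field_simp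
      have hmul := hfac.mul IH
      rw [mul_one] at hmul
      refine hmul.congr' ?_
      filter_upwards [eventually_gt_atTop 0] with x hx
      have hxs1 : (0:ℝ) < x + (s - 1) := by linarith
      have hΓx : 0 < Real.Gamma x := Real.Gamma_pos_of_pos hx
      have hG : Real.Gamma (x + s) = (x + (s-1)) * Real.Gamma (x + (s-1)) := by
        rw [show x + s = (x + (s-1)) + 1 by ring, Real.Gamma_add_one hxs1.ne']
      have hx' : x ^ s = x ^ (s - 1) * x := by
        rw [show s = (s-1) + 1 by ring, Real.rpow_add hx, Real.rpow_one]
        ring_nf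
      rw [hG, hx']
      field_simp

private lemma wendel {s : ℝ} (hs : 0 < s) :
    Tendsto (fun x : ℝ => Real.Gamma (x + s) / (Real.Gamma x * x ^ s)) atTop (𝓝 1) := by
  obtain ⟨n, hn⟩ := exists_nat_ge s
  exact wendel_aux n s hs (by push_cast; linarith)

/-- The key Gamma-ratio limit: `Γ(a+b+2)/(b^(a+1) Γ(b+1)) → 1` as `b → ∞`. -/
private lemma K1_tendsto (a : ℝ) (ha : -1 < a) :
    Tendsto (fun b : ℝ => Real.Gamma (a+b+2) / (b ^ (a+1) * Real.Gamma (b+1)))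
      atTop (𝓝 1) := by
  have h1 : Tendsto (fun b : ℝ => Real.Gamma ((b+1) + (a+1)) /
      (Real.Gamma (b+1) * (b+1) ^ (a+1))) atTop (𝓝 1) :=
    (wendel (by linarith : (0:ℝ) < a + 1)).comp (tendsto_atTop_add_const_right atTop 1 tendsto_id)
  have h2 : Tendsto (fun b : ℝ => ((b+1)/b) ^ (a+1)) atTop (𝓝 1) := by
    have h0 : Tendsto (fun b : ℝ => 1 + 1 / b) atTop (𝓝 1) := by
      simpa using tendsto_const_nhds.add
        (Tendsto.div_atTop (tendsto_const_nhds (x := (1:ℝ))) tendsto_id)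
    have := (h0.rpow_const (p := a + 1) (Or.inl one_ne_zero))
    rw [Real.one_rpow] at this
    refine this.congr' ?_
    filter_upwards [eventually_gt_atTop 0] with b hb
    rw [show 1 + 1/b = (b+1)/b by field_simp]
  have hmul := h1.mul h2
  rw [mul_one] at hmul
  refine hmul.congr' ?_
  filter_upwards [eventually_gt_atTop 0] with b hb
  have hb1 : (0:ℝ) < b + 1 := by linarith
  have hΓ : 0 < Real.Gamma (b+1) := Real.Gamma_pos_of_pos hb1
  have hbp : 0 < b ^ (a+1) := Real.rpow_pos_of_pos hb _
  have hb1p : 0 < (b+1) ^ (a+1) := Real.rpow_pos_of_pos hb1 _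
  have hdiv : ((b+1)/b) ^ (a+1) = (b+1)^(a+1) / b^(a+1) := Real.div_rpow hb1.le hb.le (a+1)
  rw [hdiv, show (b+1) + (a+1) = a+b+2 by ring]
  field_simp

/-- Change of variables `x = 1 - 2t/b` for lower Lebesgue integrals on `(-1,1)`. -/
private lemma cov (b : ℝ) (hb : 0 < b) (G : ℝ → ℝ≥0∞) (hG : Measurable G) :
    ∫⁻ x in Set.Ioo (-1:ℝ) 1, G x
      = ENNReal.ofReal (2/b) * ∫⁻ t in Set.Ioo (0:ℝ) b, G (1 - 2/b * t) := by
  have hcne : (-(2/b)) ≠ 0 := by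
    simp only [neg_ne_zero]; positivity
  have hmap : Measure.map (fun t : ℝ => 1 - 2/b * t) volume
      = ENNReal.ofReal (b/2) • volume := by
    have hco : (fun t : ℝ => 1 - 2/b * t) = (fun y : ℝ => 1 + y) ∘ (fun t => (-(2/b)) * t) := by
      funext t; simp [Function.comp]; ring
    rw [hco, ← Measure.map_map (by fun_prop) (by fun_prop), Real.map_volume_mul_left hcne,
      Measure.map_smul, map_add_left_eq_self]
    congr 1
    rw [abs_inv, abs_neg, abs_of_pos (by positivity)]
    congr 1
    field_simp
  have hpre : (fun t : ℝ => 1 - 2/b * t) ⁻¹' (Set.Ioo (-1:ℝ) 1) = Set.Ioo (0:ℝ) b := by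
    have hb2 : (0:ℝ) < 2/b := by positivity
    have h2b : 2/b * b = 2 := by field_simp
    ext t
    simp only [Set.mem_preimage, Set.mem_Ioo]
    constructor
    · rintro ⟨h1, h2⟩
      have hx : 0 < 2/b * t := by linarith
      have hy : 2/b * t < 2 := by linarith
      constructor
      · by_contra hc
        push_neg at hc
        nlinarith
      · by_contra hc
        push_neg at hc
        have := mul_le_mul_of_nonneg_left hc hb2.le
        rw [h2b] at this
        linarith
    · rintro ⟨ht0, htb⟩
      have hx : 0 < 2/b * t := mul_pos hb2 ht0
      have hy : 2/b * t < 2 := by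
        have := mul_lt_mul_of_pos_left htb hb2
        rwa [h2b] at this
      constructor <;> linarith
  calc ∫⁻ x in Set.Ioo (-1:ℝ) 1, G x
      = ∫⁻ x, (Set.Ioo (-1:ℝ) 1).indicator G x ∂volume :=
        (lintegral_indicator measurableSet_Ioo G).symm
    _ = ENNReal.ofReal (2/b) *
        ∫⁻ x, (Set.Ioo (-1:ℝ) 1).indicator G x ∂(ENNReal.ofReal (b/2) • volume) := by
        rw [lintegral_smul_measure, smul_eq_mul, ← mul_assoc, ← ENNReal.ofReal_mul (by positivity),
          show 2/b * (b/2) = 1 by field_simp]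
        simp
    _ = ENNReal.ofReal (2/b) *
        ∫⁻ x, (Set.Ioo (-1:ℝ) 1).indicator G x
          ∂(Measure.map (fun t : ℝ => 1 - 2/b * t) volume) := by rw [hmap]
    _ = ENNReal.ofReal (2/b) *
        ∫⁻ t, (Set.Ioo (-1:ℝ) 1).indicator G (1 - 2/b * t) ∂volume := by
        rw [lintegral_map (hG.indicator measurableSet_Ioo) (by fun_prop)]
    _ = ENNReal.ofReal (2/b) * ∫⁻ t in Set.Ioo (0:ℝ) b, G (1 - 2/b * t) := by
        congr 1
        rw [← lintegral_indicator measurableSet_Ioo]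
        congr 1
        funext t
        rw [← hpre, ← Set.indicator_comp_right (fun t : ℝ => 1 - 2/b * t)
          (g := G) (x := t)]
        rfl

/-- The main change-of-variables identity for the squared norm. -/
private lemma main_eq (a b : ℝ) (ha : -1 < a) (hb : 0 < b) (g : ℝ → ℝ) (hg : Measurable g) :
    ∫⁻ x, (‖(Set.Icc (-1:ℝ) 1).indicator (fun x => g (b/2*(1-x))) x‖₊ : ℝ≥0∞) ^ (2:ℕ)
        ∂(jacobiMeasure a b)
      = ∫⁻ t in Set.Ioi (0:ℝ), (Set.Ioo (0:ℝ) b).indicator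
          (fun t => (‖g t‖₊ : ℝ≥0∞) ^ (2:ℕ) * ENNReal.ofReal (t^a * (1 - t/b)^b *
            (Real.Gamma (a+b+2) / (b^(a+1) * Real.Gamma (a+1) * Real.Gamma (b+1))))) t := by
  have hΓ1 : 0 < Real.Gamma (a+1) := Real.Gamma_pos_of_pos (by linarith)
  have hΓ2 : 0 < Real.Gamma (b+1) := Real.Gamma_pos_of_pos (by linarith)
  have hΓ3 : 0 < Real.Gamma (a+b+2) := Real.Gamma_pos_of_pos (by linarith)
  set C : ℝ := Real.Gamma (a+b+2) / (2^(a+b+1) * Real.Gamma (a+1) * Real.Gamma (b+1)) with hC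
  set G : ℝ → ℝ≥0∞ := fun x => (‖g (b/2*(1-x))‖₊ : ℝ≥0∞) ^ (2:ℕ) *
    ENNReal.ofReal ((1-x)^a * (1+x)^b * C) with hGdef
  have hGmeas : Measurable G := by
    apply Measurable.mul (M := ℝ≥0∞) (f := fun x => (‖g (b/2*(1-x))‖₊ : ℝ≥0∞) ^ (2:ℕ))
      (g := fun x => ENNReal.ofReal ((1-x)^a * (1+x)^b * C))
    · exact ((hg.comp (by fun_prop)).nnnorm.coe_nnreal_ennreal).pow_const 2
    · fun_prop
  have hwmeas : Measurable (fun x : ℝ => ENNReal.ofReal ((1-x)^a * (1+x)^b * C)) := by fun_prop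
  have hindmeas : Measurable (fun x : ℝ =>
      (‖(Set.Icc (-1:ℝ) 1).indicator (fun x => g (b/2*(1-x))) x‖₊ : ℝ≥0∞) ^ (2:ℕ)) := by
    exact (((hg.comp (by fun_prop)).indicator
      measurableSet_Icc).nnnorm.coe_nnreal_ennreal).pow_const 2
  rw [show jacobiMeasure a b = (volume.restrict (Set.Ioo (-1 : ℝ) 1)).withDensity fun x =>
      ENNReal.ofReal ((1 - x) ^ a * (1 + x) ^ b * C) from rfl,
    lintegral_withDensity_eq_lintegral_mul _ hwmeas hindmeas]
  have hstep1 : ∫⁻ x, ((fun x : ℝ => ENNReal.ofReal ((1-x)^a * (1+x)^b * C)) *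
      fun x : ℝ => (‖(Set.Icc (-1:ℝ) 1).indicator (fun x => g (b/2*(1-x))) x‖₊ : ℝ≥0∞) ^ (2:ℕ)) x
        ∂(volume.restrict (Set.Ioo (-1:ℝ) 1))
      = ∫⁻ x in Set.Ioo (-1:ℝ) 1, G x := by
    apply setLIntegral_congr_fun measurableSet_Ioo
    intro x hx
    have hxIcc : x ∈ Set.Icc (-1:ℝ) 1 := ⟨hx.1.le, hx.2.le⟩
    simp only [Pi.mul_apply, Set.indicator_of_mem hxIcc, hGdef]
    ring
  rw [hstep1, cov b hb G hGmeas, ← lintegral_const_mul' _ _ ENNReal.ofReal_ne_top]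
  have hstep2 : ∫⁻ t in Set.Ioo (0:ℝ) b, ENNReal.ofReal (2/b) * G (1 - 2/b * t)
      = ∫⁻ t in Set.Ioo (0:ℝ) b, (‖g t‖₊ : ℝ≥0∞) ^ (2:ℕ) *
          ENNReal.ofReal (t^a * (1 - t/b)^b *
            (Real.Gamma (a+b+2) / (b^(a+1) * Real.Gamma (a+1) * Real.Gamma (b+1)))) := by
    apply setLIntegral_congr_fun measurableSet_Ioo
    intro t ht
    have ht0 : 0 < t := ht.1
    have htb : t < b := ht.2
    have h1tb : 0 < 1 - t/b := by
      rw [sub_pos, div_lt_one hb]; exact htb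
    have harg : b/2*(1-(1 - 2/b * t)) = t := by field_simp; ring
    have h1x : 1-(1 - 2/b * t) = 2/b * t := by ring
    have h2x : 1+(1 - 2/b * t) = 2*(1 - t/b) := by field_simp; ring
    have h2a : (0:ℝ) < 2^a := Real.rpow_pos_of_pos two_pos a
    have h2b : (0:ℝ) < 2^b := Real.rpow_pos_of_pos two_pos b
    have hba : (0:ℝ) < b^a := Real.rpow_pos_of_pos hb a
    have hreal : (2/b) * ((1-(1 - 2/b * t))^a * (1+(1 - 2/b * t))^b * C)
        = t^a * (1 - t/b)^b *
          (Real.Gamma (a+b+2) / (b^(a+1) * Real.Gamma (a+1) * Real.Gamma (b+1))) := by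
      rw [h1x, h2x, Real.mul_rpow (le_of_lt (by positivity : (0:ℝ) < 2/b)) ht0.le,
        Real.mul_rpow (by norm_num : (0:ℝ) ≤ 2) h1tb.le,
        Real.div_rpow (by norm_num : (0:ℝ) ≤ 2) hb.le a, hC,
        show (2:ℝ)^(a+b+1) = 2^a * 2^b * 2 by
          rw [Real.rpow_add two_pos, Real.rpow_add two_pos, Real.rpow_one],
        show b^(a+1) = b^a * b by rw [Real.rpow_add hb, Real.rpow_one]]
      field_simp
    simp only [hGdef]
    rw [harg, ← mul_assoc, mul_comm (ENNReal.ofReal (2/b)), mul_assoc,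
      ← ENNReal.ofReal_mul (by positivity : (0:ℝ) ≤ 2/b), hreal]
  rw [hstep2, lintegral_indicator measurableSet_Ioo,
    Measure.restrict_restrict measurableSet_Ioo,
    Set.inter_eq_self_of_subset_left Set.Ioo_subset_Ioi_self]

/-- The squared norm of `f` under the Gamma measure as an explicit Lebesgue integral. -/
private lemma gamma_eq (a : ℝ) (g : ℝ → ℝ) (hg : Measurable g) :
    ∫⁻ x, (‖g x‖₊ : ℝ≥0∞) ^ (2:ℕ) ∂(gammaMeasure a)
      = ∫⁻ t in Set.Ioi (0:ℝ), (‖g t‖₊ : ℝ≥0∞) ^ (2:ℕ) *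
          ENNReal.ofReal (t^a * Real.exp (-t) / Real.Gamma (a+1)) := by
  rw [show gammaMeasure a = (volume.restrict (Set.Ioi (0 : ℝ))).withDensity fun x =>
      ENNReal.ofReal (x ^ a * Real.exp (-x) / Real.Gamma (a + 1)) from rfl,
    lintegral_withDensity_eq_lintegral_mul _ (by fun_prop)
      ((hg.nnnorm.coe_nnreal_ennreal).pow_const 2)]
  apply lintegral_congr
  intro t
  simp only [Pi.mul_apply]
  ring

private lemma eLp2 {μ : Measure ℝ} (h : ℝ → ℝ) :
    eLpNorm h 2 μ = (∫⁻ x, (‖h x‖₊ : ℝ≥0∞) ^ (2:ℕ) ∂μ) ^ (1/2 : ℝ) := by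
  rw [eLpNorm_eq_lintegral_rpow_enorm_toReal two_ne_zero ENNReal.ofNat_ne_top]
  norm_num [ENNReal.rpow_two, enorm_eq_nnnorm]

end AuxRiesz


/-- Norm relation: `‖f_β‖_{L²(μ_{α,β})} → ‖f‖_{L²(μ_α)}` as `β → ∞`. -/
theorem stmt_5 (a : ℝ) (ha : -1 < a) (f : ℝ → ℝ) (hf : MemLp f 2 (gammaMeasure a)) :
    (∀ b : ℝ, 0 < b →
      MemLp (Set.indicator (Set.Icc (-1 : ℝ) 1) fun x => f (b / 2 * (1 - x))) 2
        (jacobiMeasure a b)) ∧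
    Tendsto (fun b : ℝ =>
        eLpNorm (Set.indicator (Set.Icc (-1 : ℝ) 1) fun x => f (b / 2 * (1 - x))) 2
          (jacobiMeasure a b))
      atTop (nhds (eLpNorm f 2 (gammaMeasure a))) := by
  classical
  have hsm := hf.1
  set g : ℝ → ℝ := hsm.mk f with hgdef
  have hgm : Measurable g := hsm.measurable_mk
  have hfg : f =ᵐ[gammaMeasure a] g := hsm.ae_eq_mk
  have hΓ1 : 0 < Real.Gamma (a+1) := Real.Gamma_pos_of_pos (by linarith)
  -- the exceptional null set
  have hnull : volume ({x | f x ≠ g x} ∩ Set.Ioi 0) = 0 := by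
    have h0 : gammaMeasure a {x | ¬ f x = g x} = 0 := ae_iff.mp hfg
    rw [show gammaMeasure a = (volume.restrict (Set.Ioi (0:ℝ))).withDensity fun x =>
        ENNReal.ofReal (x ^ a * Real.exp (-x) / Real.Gamma (a + 1)) from rfl,
      withDensity_apply_eq_zero (by fun_prop),
      Measure.restrict_apply' measurableSet_Ioi] at h0
    refine measure_mono_null ?_ h0
    rintro x ⟨hne, hx⟩
    refine ⟨⟨?_, hne⟩, hx⟩
    simp only [Set.mem_setOf_eq, ne_eq, ENNReal.ofReal_eq_zero, not_le]
    have hx0 : (0:ℝ) < x := hx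
    have : (0:ℝ) < x ^ a := Real.rpow_pos_of_pos hx0 a
    positivity
  obtain ⟨Nset, hsubN, hNmeas, hNnull⟩ := exists_measurable_superset_of_null hnull
  -- a.e. equality of the two indicator functions for each b > 0
  have heq_ae : ∀ b : ℝ, 0 < b →
      (Set.Icc (-1:ℝ) 1).indicator (fun x => f (b/2*(1-x)))
        =ᵐ[jacobiMeasure a b] (Set.Icc (-1:ℝ) 1).indicator (fun x => g (b/2*(1-x))) := by
    intro b hb
    have hac : jacobiMeasure a b ≪ volume.restrict (Set.Ioo (-1:ℝ) 1) :=
      withDensity_absolutelyContinuous _ _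
    refine Filter.EventuallyEq.filter_mono ?_ hac.ae_le
    rw [Filter.EventuallyEq, ae_iff, Measure.restrict_apply' measurableSet_Ioo]
    have hTm : Measurable (fun x : ℝ => b/2*(1-x)) := by fun_prop
    have hTnull : volume ((fun x : ℝ => b/2*(1-x)) ⁻¹' Nset) = 0 := by
      have hmap : Measure.map (fun x : ℝ => b/2*(1-x)) volume
          = ENNReal.ofReal (2/b) • volume := by
        have hcne : (-(b/2)) ≠ 0 := by simp only [neg_ne_zero]; positivity
        have hco : (fun x : ℝ => b/2*(1-x))
            = (fun y : ℝ => b/2 + y) ∘ (fun x => (-(b/2)) * x) := by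
          funext x; simp [Function.comp]; ring
        rw [hco, ← Measure.map_map (by fun_prop) (by fun_prop), Real.map_volume_mul_left hcne,
          Measure.map_smul, map_add_left_eq_self]
        congr 1
        rw [abs_inv, abs_neg, abs_of_pos (by positivity)]
        congr 1
        field_simp
      have hma : Measure.map (fun x : ℝ => b/2*(1-x)) volume Nset
          = volume ((fun x : ℝ => b/2*(1-x)) ⁻¹' Nset) := Measure.map_apply hTm hNmeas
      rw [hmap, Measure.smul_apply, hNnull, smul_zero] at hma
      exact hma.symm
    refine measure_mono_null ?_ hTnull
    rintro x ⟨hne, hx⟩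
    have hxIcc : x ∈ Set.Icc (-1:ℝ) 1 := ⟨hx.1.le, hx.2.le⟩
    simp only [Set.mem_setOf_eq, Set.indicator_of_mem hxIcc] at hne
    refine hsubN ⟨hne, ?_⟩
    simp only [Set.mem_Ioi]
    nlinarith [hx.2]
  -- the limiting constant
  have hK1 := K1_tendsto a ha
  have hκ : Tendsto (fun b : ℝ =>
      Real.Gamma (a+b+2) / (b^(a+1) * Real.Gamma (a+1) * Real.Gamma (b+1)))
      atTop (nhds (1 / Real.Gamma (a+1))) := by
    have hdc := hK1.div_const (Real.Gamma (a+1))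
    refine hdc.congr fun b => ?_
    rw [div_div]
    congr 1
    ring
  -- the Gamma-side squared norm
  set I : ℝ≥0∞ := ∫⁻ t in Set.Ioi (0:ℝ), (‖g t‖₊ : ℝ≥0∞) ^ (2:ℕ) *
    ENNReal.ofReal (t^a * Real.exp (-t) / Real.Gamma (a+1)) with hI
  have hIeq : ∫⁻ x, (‖f x‖₊ : ℝ≥0∞) ^ (2:ℕ) ∂(gammaMeasure a) = I := by
    rw [lintegral_congr_ae (g := fun x => (‖g x‖₊ : ℝ≥0∞) ^ (2:ℕ))
      (by filter_upwards [hfg] with x hx; rw [hx]), gamma_eq a g hgm]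
  have hIfin : I ≠ ⊤ := by
    intro htop
    have h2 := hf.2
    rw [eLp2, hIeq, htop, ENNReal.top_rpow_of_pos (by norm_num)] at h2
    exact lt_irrefl _ h2
  have hL : eLpNorm f 2 (gammaMeasure a) = I ^ (1/2 : ℝ) := by rw [eLp2, hIeq]
  -- membership
  have hmem : ∀ b : ℝ, 0 < b →
      MemLp ((Set.Icc (-1:ℝ) 1).indicator fun x => f (b/2*(1-x))) 2 (jacobiMeasure a b) := by
    intro b hb
    have hΓ2 : 0 < Real.Gamma (b+1) := Real.Gamma_pos_of_pos (by linarith)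
    have hΓ3 : 0 < Real.Gamma (a+b+2) := Real.Gamma_pos_of_pos (by linarith)
    have hbp : (0:ℝ) < b^(a+1) := Real.rpow_pos_of_pos hb _
    have hgind : Measurable ((Set.Icc (-1:ℝ) 1).indicator fun x => g (b/2*(1-x))) :=
      (hgm.comp (by fun_prop)).indicator measurableSet_Icc
    constructor
    · exact hgind.aestronglyMeasurable.congr (heq_ae b hb).symm
    · rw [eLpNorm_congr_ae (heq_ae b hb), eLp2, main_eq a b ha hb g hgm]
      apply ENNReal.rpow_lt_top_of_nonneg (by norm_num)
      rw [← lt_top_iff_ne_top]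
      have hCb0 : (0:ℝ) ≤ Real.Gamma (a+b+2) / (b^(a+1) * Real.Gamma (b+1)) := by positivity
      calc ∫⁻ t in Set.Ioi (0:ℝ), (Set.Ioo (0:ℝ) b).indicator
            (fun t => (‖g t‖₊ : ℝ≥0∞) ^ (2:ℕ) * ENNReal.ofReal (t^a * (1 - t/b)^b *
              (Real.Gamma (a+b+2) / (b^(a+1) * Real.Gamma (a+1) * Real.Gamma (b+1))))) t
          ≤ ∫⁻ t in Set.Ioi (0:ℝ), ENNReal.ofReal (Real.Gamma (a+b+2) / (b^(a+1) * Real.Gamma (b+1)))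
              * ((‖g t‖₊ : ℝ≥0∞) ^ (2:ℕ) *
                ENNReal.ofReal (t^a * Real.exp (-t) / Real.Gamma (a+1))) := by
            apply lintegral_mono
            intro t
            by_cases htm : t ∈ Set.Ioo (0:ℝ) b
            · rw [Set.indicator_of_mem htm]
              have ht0 : 0 < t := htm.1
              have htb : t < b := htm.2
              have hta : (0:ℝ) ≤ t^a := (Real.rpow_pos_of_pos ht0 a).le
              have h1tb : (0:ℝ) ≤ 1 - t/b := by
                rw [sub_nonneg]; exact (div_le_one hb).mpr htb.le
              have hexp : (1 - t/b)^b ≤ Real.exp (-t) := by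
                have h1 : 1 - t/b ≤ Real.exp (-(t/b)) := by
                  have := Real.add_one_le_exp (-(t/b)); linarith
                have h2 : (1 - t/b)^b ≤ (Real.exp (-(t/b)))^b :=
                  Real.rpow_le_rpow h1tb h1 hb.le
                have h3 : (Real.exp (-(t/b)))^b = Real.exp (-t) := by
                  rw [Real.rpow_def_of_pos (Real.exp_pos _), Real.log_exp]
                  congr 1
                  field_simp
                rwa [h3] at h2
              have hk0 : (0:ℝ) ≤ Real.Gamma (a+b+2) /
                  (b^(a+1) * Real.Gamma (a+1) * Real.Gamma (b+1)) := by positivity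
              have hψle : t^a * (1 - t/b)^b *
                  (Real.Gamma (a+b+2) / (b^(a+1) * Real.Gamma (a+1) * Real.Gamma (b+1)))
                  ≤ (Real.Gamma (a+b+2) / (b^(a+1) * Real.Gamma (b+1))) *
                    (t^a * Real.exp (-t) / Real.Gamma (a+1)) := by
                have hstep : t^a * (1 - t/b)^b *
                    (Real.Gamma (a+b+2) / (b^(a+1) * Real.Gamma (a+1) * Real.Gamma (b+1)))
                    ≤ t^a * Real.exp (-t) *
                    (Real.Gamma (a+b+2) / (b^(a+1) * Real.Gamma (a+1) * Real.Gamma (b+1))) :=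
                  mul_le_mul_of_nonneg_right (mul_le_mul_of_nonneg_left hexp hta) hk0
                refine hstep.trans (le_of_eq ?_)
                field_simp
              calc (‖g t‖₊ : ℝ≥0∞) ^ (2:ℕ) * ENNReal.ofReal (t^a * (1 - t/b)^b *
                    (Real.Gamma (a+b+2) / (b^(a+1) * Real.Gamma (a+1) * Real.Gamma (b+1))))
                  ≤ (‖g t‖₊ : ℝ≥0∞) ^ (2:ℕ) * ENNReal.ofReal
                      ((Real.Gamma (a+b+2) / (b^(a+1) * Real.Gamma (b+1))) *
                        (t^a * Real.exp (-t) / Real.Gamma (a+1))) :=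
                    mul_le_mul_right (ENNReal.ofReal_le_ofReal hψle) _
                _ = ENNReal.ofReal (Real.Gamma (a+b+2) / (b^(a+1) * Real.Gamma (b+1)))
                      * ((‖g t‖₊ : ℝ≥0∞) ^ (2:ℕ) *
                        ENNReal.ofReal (t^a * Real.exp (-t) / Real.Gamma (a+1))) := by
                    rw [ENNReal.ofReal_mul hCb0]
                    ring
            · rw [Set.indicator_of_notMem htm]
              exact zero_le
        _ = ENNReal.ofReal (Real.Gamma (a+b+2) / (b^(a+1) * Real.Gamma (b+1))) * I :=
            lintegral_const_mul' _ _ ENNReal.ofReal_ne_top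
        _ < ⊤ := ENNReal.mul_lt_top ENNReal.ofReal_lt_top hIfin.lt_top
  refine ⟨hmem, ?_⟩
  -- convergence of the squared norms
  have hJ : Tendsto (fun b : ℝ => ∫⁻ t in Set.Ioi (0:ℝ), (Set.Ioo (0:ℝ) b).indicator
      (fun t => (‖g t‖₊ : ℝ≥0∞) ^ (2:ℕ) * ENNReal.ofReal (t^a * (1 - t/b)^b *
        (Real.Gamma (a+b+2) / (b^(a+1) * Real.Gamma (a+1) * Real.Gamma (b+1))))) t)
      atTop (nhds I) := by
    rw [tendsto_iff_seq_tendsto]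
    intro u hu
    have hev : ∀ᶠ n in atTop,
        Real.Gamma (a + u n + 2) / ((u n)^(a+1) * Real.Gamma (u n + 1)) < 2 ∧ 0 < u n :=
      ((hK1.comp hu).eventually_lt_const (by norm_num : (1:ℝ) < 2)).and
        (hu.eventually (eventually_gt_atTop 0))
    obtain ⟨N₀, hN₀⟩ := eventually_atTop.mp hev
    rw [← tendsto_add_atTop_iff_nat N₀]
    have hu' : Tendsto (fun n => u (n + N₀)) atTop atTop := hu.comp (tendsto_add_atTop_nat N₀)
    have hdct := tendsto_lintegral_of_dominated_convergence
      (μ := volume.restrict (Set.Ioi (0:ℝ)))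
      (F := fun n t => (Set.Ioo (0:ℝ) (u (n + N₀))).indicator
        (fun t => (‖g t‖₊ : ℝ≥0∞) ^ (2:ℕ) * ENNReal.ofReal (t^a * (1 - t/(u (n + N₀)))^(u (n + N₀)) *
          (Real.Gamma (a + u (n + N₀) + 2) / ((u (n + N₀))^(a+1) * Real.Gamma (a+1) *
            Real.Gamma (u (n + N₀) + 1))))) t)
      (f := fun t => (‖g t‖₊ : ℝ≥0∞) ^ (2:ℕ) *
        ENNReal.ofReal (t^a * Real.exp (-t) / Real.Gamma (a+1)))
      (bound := fun t => (‖g t‖₊ : ℝ≥0∞) ^ (2:ℕ) *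
        (2 * ENNReal.ofReal (t^a * Real.exp (-t) / Real.Gamma (a+1))))
      ?_ ?_ ?_ ?_
    · exact hdct
    · -- measurability
      intro n
      exact (((hgm.nnnorm.coe_nnreal_ennreal).pow_const 2).mul
        (by fun_prop)).indicator measurableSet_Ioo
    · -- domination
      intro n
      apply ae_of_all
      intro t
      dsimp only
      obtain ⟨hlt, hbpos⟩ := hN₀ (n + N₀) (Nat.le_add_left _ _)
      set b := u (n + N₀) with hbdef
      by_cases htm : t ∈ Set.Ioo (0:ℝ) b
      · rw [Set.indicator_of_mem htm]
        have ht0 : 0 < t := htm.1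
        have htb : t < b := htm.2
        have hta : (0:ℝ) ≤ t^a := (Real.rpow_pos_of_pos ht0 a).le
        have hbp : (0:ℝ) < b^(a+1) := Real.rpow_pos_of_pos hbpos _
        have hΓ2 : 0 < Real.Gamma (b+1) := Real.Gamma_pos_of_pos (by linarith)
        have hΓ3 : 0 < Real.Gamma (a+b+2) := Real.Gamma_pos_of_pos (by linarith)
        have h1tb : (0:ℝ) ≤ 1 - t/b := by
          rw [sub_nonneg]; exact (div_le_one hbpos).mpr htb.le
        have hexp : (1 - t/b)^b ≤ Real.exp (-t) := by
          have h1 : 1 - t/b ≤ Real.exp (-(t/b)) := by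
            have := Real.add_one_le_exp (-(t/b)); linarith
          have h2 : (1 - t/b)^b ≤ (Real.exp (-(t/b)))^b :=
            Real.rpow_le_rpow h1tb h1 hbpos.le
          have h3 : (Real.exp (-(t/b)))^b = Real.exp (-t) := by
            rw [Real.rpow_def_of_pos (Real.exp_pos _), Real.log_exp]
            congr 1
            field_simp
          rwa [h3] at h2
        have hk0 : (0:ℝ) ≤ Real.Gamma (a+b+2) /
            (b^(a+1) * Real.Gamma (a+1) * Real.Gamma (b+1)) := by positivity
        have hκle : Real.Gamma (a+b+2) / (b^(a+1) * Real.Gamma (a+1) * Real.Gamma (b+1))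
            ≤ 2 / Real.Gamma (a+1) := by
          rw [show b^(a+1) * Real.Gamma (a+1) * Real.Gamma (b+1)
              = (b^(a+1) * Real.Gamma (b+1)) * Real.Gamma (a+1) from by ring, ← div_div]
          gcongr
        have hψle : t^a * (1 - t/b)^b *
            (Real.Gamma (a+b+2) / (b^(a+1) * Real.Gamma (a+1) * Real.Gamma (b+1)))
            ≤ 2 * (t^a * Real.exp (-t) / Real.Gamma (a+1)) := by
          have hstep : t^a * (1 - t/b)^b *
              (Real.Gamma (a+b+2) / (b^(a+1) * Real.Gamma (a+1) * Real.Gamma (b+1)))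
              ≤ (t^a * Real.exp (-t)) *
                (Real.Gamma (a+b+2) / (b^(a+1) * Real.Gamma (a+1) * Real.Gamma (b+1))) :=
            mul_le_mul_of_nonneg_right (mul_le_mul_of_nonneg_left hexp hta) hk0
          have hstep2 : (t^a * Real.exp (-t)) *
              (Real.Gamma (a+b+2) / (b^(a+1) * Real.Gamma (a+1) * Real.Gamma (b+1)))
              ≤ (t^a * Real.exp (-t)) * (2 / Real.Gamma (a+1)) :=
            mul_le_mul_of_nonneg_left hκle (by positivity)
          refine (hstep.trans hstep2).trans (le_of_eq ?_)
          ring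
        calc (‖g t‖₊ : ℝ≥0∞) ^ (2:ℕ) * ENNReal.ofReal (t^a * (1 - t/b)^b *
              (Real.Gamma (a+b+2) / (b^(a+1) * Real.Gamma (a+1) * Real.Gamma (b+1))))
            ≤ (‖g t‖₊ : ℝ≥0∞) ^ (2:ℕ) *
              ENNReal.ofReal (2 * (t^a * Real.exp (-t) / Real.Gamma (a+1))) :=
              mul_le_mul_right (ENNReal.ofReal_le_ofReal hψle) _
          _ = (‖g t‖₊ : ℝ≥0∞) ^ (2:ℕ) *
              (2 * ENNReal.ofReal (t^a * Real.exp (-t) / Real.Gamma (a+1))) := by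
              rw [ENNReal.ofReal_mul (by norm_num : (0:ℝ) ≤ 2), ENNReal.ofReal_ofNat]
      · rw [Set.indicator_of_notMem htm]
        exact zero_le
    · -- finiteness of the bound
      have hbd : ∫⁻ t in Set.Ioi (0:ℝ), (‖g t‖₊ : ℝ≥0∞) ^ (2:ℕ) *
          (2 * ENNReal.ofReal (t^a * Real.exp (-t) / Real.Gamma (a+1))) = 2 * I := by
        rw [show (fun t => (‖g t‖₊ : ℝ≥0∞) ^ (2:ℕ) *
            (2 * ENNReal.ofReal (t^a * Real.exp (-t) / Real.Gamma (a+1))))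
            = fun t => 2 * ((‖g t‖₊ : ℝ≥0∞) ^ (2:ℕ) *
              ENNReal.ofReal (t^a * Real.exp (-t) / Real.Gamma (a+1)))
            from funext fun t => by ring]
        exact lintegral_const_mul' 2 _ (by norm_num)
      rw [hbd]
      exact ENNReal.mul_ne_top (by norm_num) hIfin
    · -- pointwise convergence
      filter_upwards [ae_restrict_mem measurableSet_Ioi] with t ht
      have hpow : Tendsto (fun b : ℝ => (1 - t/b)^b) atTop (nhds (Real.exp (-t))) := by
        have h0 := tendsto_one_add_div_rpow_exp (-t)
        refine h0.congr fun x => ?_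
        rw [neg_div, ← sub_eq_add_neg]
      have hreal : Tendsto (fun n => t^a * (1 - t/(u (n + N₀)))^(u (n + N₀)) *
          (Real.Gamma (a + u (n + N₀) + 2) / ((u (n + N₀))^(a+1) * Real.Gamma (a+1) *
            Real.Gamma (u (n + N₀) + 1)))) atTop
          (nhds (t^a * Real.exp (-t) * (1 / Real.Gamma (a+1)))) :=
        ((tendsto_const_nhds.mul hpow).mul hκ).comp hu'
      have hfinN : ((‖g t‖₊ : ℝ≥0∞) ^ (2:ℕ)) ≠ ⊤ := ENNReal.pow_ne_top ENNReal.coe_ne_top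
      have hlimpt : Tendsto (fun n => (‖g t‖₊ : ℝ≥0∞) ^ (2:ℕ) *
          ENNReal.ofReal (t^a * (1 - t/(u (n + N₀)))^(u (n + N₀)) *
            (Real.Gamma (a + u (n + N₀) + 2) / ((u (n + N₀))^(a+1) * Real.Gamma (a+1) *
              Real.Gamma (u (n + N₀) + 1))))) atTop
          (nhds ((‖g t‖₊ : ℝ≥0∞) ^ (2:ℕ) *
            ENNReal.ofReal (t^a * Real.exp (-t) * (1 / Real.Gamma (a+1))))) :=
        ENNReal.Tendsto.const_mul (ENNReal.tendsto_ofReal hreal) (Or.inr hfinN)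
      rw [show t^a * Real.exp (-t) * (1 / Real.Gamma (a+1))
        = t^a * Real.exp (-t) / Real.Gamma (a+1) from by ring] at hlimpt
      refine hlimpt.congr' ?_
      filter_upwards [hu'.eventually (eventually_gt_atTop t)] with n hn
      have htm : t ∈ Set.Ioo 0 (u (n + N₀)) := ⟨ht, hn⟩
      rw [Set.indicator_of_mem htm]
  have hcont : Tendsto (fun b : ℝ => (∫⁻ t in Set.Ioi (0:ℝ), (Set.Ioo (0:ℝ) b).indicator
      (fun t => (‖g t‖₊ : ℝ≥0∞) ^ (2:ℕ) * ENNReal.ofReal (t^a * (1 - t/b)^b *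
        (Real.Gamma (a+b+2) / (b^(a+1) * Real.Gamma (a+1) * Real.Gamma (b+1))))) t) ^ (1/2:ℝ))
      atTop (nhds (I ^ (1/2:ℝ))) :=
    (ENNReal.continuous_rpow_const.tendsto I).comp hJ
  rw [hL]
  refine hcont.congr' ?_
  filter_upwards [eventually_gt_atTop 0] with b hb
  rw [eLpNorm_congr_ae (heq_ae b hb), eLp2, main_eq a b ha hb g hgm]

end
end

section
/- Fix α > −1. Let f ∈ L²((0,∞), μ_α), let k ∈ ℕ, and for β > 0 set f_β(x) = f((β/2)(1−x))·1_{[−1,1]}(x). Then lim_{β→∞} ⟨f_β, P_k^{(α,β)}⟩_{μ_{α,β}} = ⟨f, L_k^α⟩_{μ_α}, where ⟨g,h⟩_{μ_{α,β}} = ∫_{−1}^1 gh dμ_{α,β} and ⟨g,h⟩_{μ_α} = ∫_0^∞ gh dμ_α. -/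
open MeasureTheory Filter Real
open scoped ENNReal NNReal

noncomputable section

lemma Gamma_add_nat' {x : ℝ} (hx : 0 < x) (n : ℕ) :
    Real.Gamma (x + n) = Real.Gamma x * ∏ j ∈ Finset.range n, (x + j) := by
  induction n with
  | zero => simp
  | succ n ih =>
    have h : x + ((n : ℝ) + 1) = (x + n) + 1 := by ring
    push_cast
    rw [h, Real.Gamma_add_one (by positivity), ih, Finset.prod_range_succ]
    push_cast
    ring

lemma tendsto_ratio1 (c : ℝ) : Tendsto (fun x : ℝ => (x + c) / x) atTop (nhds 1) := by
  have h : Tendsto (fun x : ℝ => 1 + c / x) atTop (nhds (1 + 0)) :=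
    tendsto_const_nhds.add (Tendsto.div_atTop tendsto_const_nhds tendsto_id)
  rw [add_zero] at h
  refine h.congr' ?_
  filter_upwards [eventually_gt_atTop 0] with x hx
  field_simp

lemma tendsto_ratio2 (c : ℝ) : Tendsto (fun x : ℝ => x / (x + c)) atTop (nhds 1) := by
  have h := (tendsto_ratio1 (-c)).comp (tendsto_atTop_add_const_right atTop c tendsto_id)
  refine h.congr fun x => ?_
  simp [Function.comp]

lemma gautschi_le {x s : ℝ} (hx : 0 < x) (hs0 : 0 ≤ s) (hs1 : s ≤ 1) :
    Real.Gamma (x + s) ≤ Real.Gamma x * x ^ s := by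
  have h := Real.convexOn_log_Gamma.2 (Set.mem_Ioi.mpr hx)
    (Set.mem_Ioi.mpr (by linarith : (0:ℝ) < x + 1)) (by linarith : (0:ℝ) ≤ 1 - s) hs0
    (by ring)
  simp only [smul_eq_mul, Function.comp] at h
  have hxs : (1 - s) * x + s * (x + 1) = x + s := by ring
  rw [hxs] at h
  have hΓ : Real.Gamma (x + 1) = x * Real.Gamma x := Real.Gamma_add_one hx.ne'
  have hΓx : 0 < Real.Gamma x := Real.Gamma_pos_of_pos hx
  rw [hΓ, Real.log_mul hx.ne' hΓx.ne'] at h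
  have h2 : Real.log (Real.Gamma (x + s)) ≤ Real.log (Real.Gamma x * x ^ s) := by
    rw [Real.log_mul hΓx.ne' (Real.rpow_pos_of_pos hx s).ne', Real.log_rpow hx]
    nlinarith
  have := Real.exp_le_exp.mpr h2
  rwa [Real.exp_log (Real.Gamma_pos_of_pos (by linarith)),
    Real.exp_log (by positivity)] at this

lemma gautschi_ge {x s : ℝ} (hx : 0 < x) (hs0 : 0 ≤ s) (hs1 : s ≤ 1) :
    Real.Gamma x * x ≤ Real.Gamma (x + s) * (x + s) ^ (1 - s) := by
  have hxs : 0 < x + s := by linarith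
  have h := Real.convexOn_log_Gamma.2 (Set.mem_Ioi.mpr hxs)
    (Set.mem_Ioi.mpr (by linarith : (0:ℝ) < x + s + 1)) hs0 (by linarith : (0:ℝ) ≤ 1 - s)
    (by ring)
  simp only [smul_eq_mul, Function.comp] at h
  have he : s * (x + s) + (1 - s) * (x + s + 1) = x + 1 := by ring
  rw [he] at h
  have hΓ1 : Real.Gamma (x + 1) = x * Real.Gamma x := Real.Gamma_add_one hx.ne'
  have hΓ2 : Real.Gamma (x + s + 1) = (x + s) * Real.Gamma (x + s) :=
    Real.Gamma_add_one hxs.ne'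
  have hΓx : 0 < Real.Gamma x := Real.Gamma_pos_of_pos hx
  have hΓxs : 0 < Real.Gamma (x + s) := Real.Gamma_pos_of_pos hxs
  rw [hΓ1, hΓ2, Real.log_mul hx.ne' hΓx.ne', Real.log_mul hxs.ne' hΓxs.ne'] at h
  have h2 : Real.log (Real.Gamma x * x) ≤ Real.log (Real.Gamma (x + s) * (x + s) ^ (1 - s)) := by
    rw [Real.log_mul hΓx.ne' hx.ne', Real.log_mul hΓxs.ne' (Real.rpow_pos_of_pos hxs _).ne',
      Real.log_rpow hxs]
    nlinarith
  have := Real.exp_le_exp.mpr h2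
  rwa [Real.exp_log (by positivity), Real.exp_log (by positivity)] at this

lemma tendsto_Gamma_ratio_base {s : ℝ} (hs0 : 0 < s) (hs1 : s ≤ 1) :
    Tendsto (fun x : ℝ => Real.Gamma (x + s) / (Real.Gamma x * x ^ s)) atTop (nhds 1) := by
  have hlow : Tendsto (fun x : ℝ => (x / (x + s)) ^ (1 - s)) atTop (nhds 1) := by
    have := (tendsto_ratio2 s).rpow_const (p := 1 - s) (Or.inl one_ne_zero)
    simpa using this
  refine tendsto_of_tendsto_of_tendsto_of_le_of_le' hlow tendsto_const_nhds ?_ ?_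
  · filter_upwards [eventually_gt_atTop 0] with x hx
    have hxs : 0 < x + s := by linarith
    have hΓx : 0 < Real.Gamma x := Real.Gamma_pos_of_pos hx
    have hd : 0 < Real.Gamma x * x ^ s := by positivity
    rw [le_div_iff₀ hd]
    have key := gautschi_ge hx hs0.le hs1
    -- (x/(x+s))^(1-s) * (Γ x * x^s) ≤ Γ (x+s)
    have hpow : (x / (x + s)) ^ (1 - s) = x ^ (1 - s) / (x + s) ^ (1 - s) :=
      Real.div_rpow hx.le hxs.le _
    have hx1 : x ^ (1 - s) * x ^ s = x := by
      rw [← Real.rpow_add hx]; simp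
    have hpos : 0 < (x + s) ^ (1 - s) := Real.rpow_pos_of_pos hxs _
    rw [hpow, div_mul_eq_mul_div, div_le_iff₀ hpos]
    calc x ^ (1 - s) * (Real.Gamma x * x ^ s) = Real.Gamma x * (x ^ (1 - s) * x ^ s) := by ring
      _ = Real.Gamma x * x := by rw [hx1]
      _ ≤ Real.Gamma (x + s) * (x + s) ^ (1 - s) := key
  · filter_upwards [eventually_gt_atTop 0] with x hx
    have hΓx : 0 < Real.Gamma x := Real.Gamma_pos_of_pos hx
    have hd : 0 < Real.Gamma x * x ^ s := by positivity
    rw [div_le_one hd]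
    exact gautschi_le hx hs0.le hs1

lemma tendsto_Gamma_ratio {s : ℝ} (hs : 0 < s) :
    Tendsto (fun x : ℝ => Real.Gamma (x + s) / (Real.Gamma x * x ^ s)) atTop (nhds 1) := by
  obtain ⟨n, hn⟩ : ∃ n : ℕ, s ≤ n + 1 := by
    obtain ⟨n, hn⟩ := exists_nat_ge s; exact ⟨n, by linarith⟩
  induction n generalizing s with
  | zero => exact tendsto_Gamma_ratio_base hs (by simpa using hn)
  | succ n ih =>
    by_cases hs1 : s ≤ n + 1
    · exact ih hs hs1
    · push_neg at hs1
      have hs1' : 0 < s - 1 := by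
        have : (0:ℝ) ≤ (n:ℝ) := Nat.cast_nonneg n
        linarith
      have h1 := (ih hs1' (by push_cast at hn ⊢; linarith)).mul (tendsto_ratio1 (s - 1))
      rw [mul_one] at h1
      refine h1.congr' ?_
      filter_upwards [eventually_gt_atTop 0] with x hx
      have hxs : (0:ℝ) < x + (s - 1) := by linarith
      have hG : Real.Gamma (x + s) = (x + s - 1) * Real.Gamma (x + (s - 1)) := by
        have : x + s = (x + (s - 1)) + 1 := by ring
        rw [this, Real.Gamma_add_one hxs.ne']
        ring_nf
      have hxp : x ^ s = x ^ (s - 1) * x := by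
        rw [← Real.rpow_add_one hx.ne']; ring_nf
      have hΓx : Real.Gamma x ≠ 0 := (Real.Gamma_pos_of_pos hx).ne'
      have hxs1 : x ^ (s-1) ≠ 0 := (Real.rpow_pos_of_pos hx _).ne'
      rw [hG, hxp]
      field_simp
      ring

lemma jacobiP_sub (a t : ℝ) (k : ℕ) {b : ℝ} (hb : 0 < b) :
    jacobiP a b k (1 - 2 * t / b) =
      ∑ ν ∈ Finset.range (k + 1),
        (Real.Gamma (k + a + 1) /
            (Real.Gamma (a + ν + 1) * (Nat.factorial (k - ν)) * (Nat.factorial ν))) *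
          (-t) ^ ν * (∏ j ∈ Finset.range ν, ((k + b - ν + 1 + j) / b)) *
          (1 - t / b) ^ (k - ν) := by
  unfold jacobiP
  refine Finset.sum_congr rfl fun ν hν => ?_
  have hνk : (ν : ℝ) ≤ k := by
    exact_mod_cast Nat.lt_succ_iff.mp (Finset.mem_range.mp hν)
  have hx : (0:ℝ) < k + b - ν + 1 := by linarith
  have hG : Real.Gamma ((k:ℝ) + b + 1) =
      Real.Gamma ((k:ℝ) + b - ν + 1) * ∏ j ∈ Finset.range ν, ((k + b - ν + 1) + j) := by
    have h : (k:ℝ) + b + 1 = ((k:ℝ) + b - ν + 1) + ν := by ring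
    rw [h, Gamma_add_nat' hx ν]
  have e1 : (1 - 2 * t / b - 1) / 2 = -(t / b) := by field_simp; ring
  have e2 : (1 - 2 * t / b + 1) / 2 = 1 - t / b := by field_simp; ring
  rw [e1, e2, hG]
  have hprod : ∏ j ∈ Finset.range ν, ((k + b - ν + 1 + j) / b) =
      (∏ j ∈ Finset.range ν, ((k + b - ν + 1) + (j:ℝ))) / b ^ ν := by
    rw [Finset.prod_div_distrib, Finset.prod_const, Finset.card_range]
  have hnegpow : (-(t / b)) ^ ν = (-t) ^ ν / b ^ ν := by
    rw [← neg_div, div_pow]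
  rw [hprod, hnegpow]
  have hΓ2 : Real.Gamma ((k:ℝ) + b - ν + 1) ≠ 0 := (Real.Gamma_pos_of_pos hx).ne'
  rw [mul_div_mul_left _ _ hΓ2]
  ring

lemma jacobiP_tendsto (a : ℝ) (k : ℕ) (t : ℝ) :
    Tendsto (fun b : ℝ => jacobiP a b k (1 - 2 * t / b)) atTop
      (nhds (laguerreL a k t)) := by
  have h : Tendsto (fun b : ℝ =>
      ∑ ν ∈ Finset.range (k + 1),
        (Real.Gamma (k + a + 1) /
            (Real.Gamma (a + ν + 1) * (Nat.factorial (k - ν)) * (Nat.factorial ν))) *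
          (-t) ^ ν * (∏ j ∈ Finset.range ν, ((k + b - ν + 1 + j) / b)) *
          (1 - t / b) ^ (k - ν)) atTop (nhds (laguerreL a k t)) := by
    have : laguerreL a k t = ∑ ν ∈ Finset.range (k + 1),
        (Real.Gamma (k + a + 1) /
            (Real.Gamma (a + ν + 1) * (Nat.factorial (k - ν)) * (Nat.factorial ν))) *
          (-t) ^ ν * (∏ j ∈ Finset.range ν, (1:ℝ)) * ((1:ℝ)) ^ (k - ν) := by
      unfold laguerreL
      refine Finset.sum_congr rfl fun ν _ => ?_
      rw [Finset.prod_const_one]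
      rw [neg_pow t ν]
      ring
    rw [this]
    refine tendsto_finset_sum _ fun ν _ => ?_
    refine Tendsto.mul (Tendsto.mul tendsto_const_nhds ?_) ?_
    · refine tendsto_finset_prod _ fun j _ => ?_
      refine (tendsto_ratio1 ((k:ℝ) - ν + 1 + j)).congr fun b => ?_
      ring_nf
    · have h1 : Tendsto (fun b : ℝ => 1 - t / b) atTop (nhds 1) := by
        have := Tendsto.div_atTop (f := fun _ : ℝ => t) tendsto_const_nhds tendsto_id
        have h2 := tendsto_const_nhds (α := ℝ) (x := (1:ℝ)) (f := atTop).sub this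
        simpa using h2
      simpa using h1.pow (k - ν)
  refine h.congr' ?_
  filter_upwards [eventually_gt_atTop 0] with b hb
  exact (jacobiP_sub a t k hb).symm

lemma jacobiP_bound (a : ℝ) (ha : -1 < a) (k : ℕ) :
    ∃ C : ℝ, 0 < C ∧ ∀ b : ℝ, 1 ≤ b → ∀ t ∈ Set.Ioo (0:ℝ) b,
      |jacobiP a b k (1 - 2 * t / b)| ≤ C * (1 + t) ^ k := by
  set A : ℕ → ℝ := fun ν => |Real.Gamma (k + a + 1)| /
      (Real.Gamma (a + ν + 1) * (Nat.factorial (k - ν)) * (Nat.factorial ν)) with hA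
  have hApos : ∀ ν : ℕ, 0 < Real.Gamma (a + ν + 1) * ((Nat.factorial (k - ν) : ℝ)) * ((Nat.factorial ν : ℝ)) := by
    intro ν
    have h1 : (0:ℝ) < Real.Gamma (a + ν + 1) :=
      Real.Gamma_pos_of_pos (by have : (0:ℝ) ≤ ν := Nat.cast_nonneg ν; linarith)
    have h2 : (0:ℝ) < (Nat.factorial (k - ν) : ℝ) := by positivity
    have h3 : (0:ℝ) < (Nat.factorial ν : ℝ) := by positivity
    positivity
  refine ⟨(∑ ν ∈ Finset.range (k + 1), A ν * (k + 2) ^ ν) + 1, ?_, ?_⟩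
  · have : 0 ≤ ∑ ν ∈ Finset.range (k + 1), A ν * (k + 2) ^ ν := by
      refine Finset.sum_nonneg fun ν _ => ?_
      have := hApos ν
      have h0 := hApos ν
      have hAν : 0 ≤ A ν := by rw [hA]; positivity
      positivity
    linarith
  · intro b hb t ht
    obtain ⟨ht0, htb⟩ := ht
    have hb0 : (0:ℝ) < b := by linarith
    have h1t : (1:ℝ) ≤ 1 + t := by linarith
    have hpow : (0:ℝ) ≤ (1 + t) ^ k := by positivity
    rw [jacobiP_sub a t k hb0]
    calc |∑ ν ∈ Finset.range (k + 1), _| ≤ ∑ ν ∈ Finset.range (k + 1),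
          |(Real.Gamma (k + a + 1) /
            (Real.Gamma (a + ν + 1) * (Nat.factorial (k - ν)) * (Nat.factorial ν))) *
          (-t) ^ ν * (∏ j ∈ Finset.range ν, ((k + b - ν + 1 + j) / b)) *
          (1 - t / b) ^ (k - ν)| := Finset.abs_sum_le_sum_abs _ _
      _ ≤ ∑ ν ∈ Finset.range (k + 1), A ν * (k + 2) ^ ν * (1 + t) ^ k := by
          refine Finset.sum_le_sum fun ν hν => ?_
          have hνk : (ν : ℝ) ≤ k := by
            exact_mod_cast Nat.lt_succ_iff.mp (Finset.mem_range.mp hν)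
          have hden := hApos ν
          -- bound each factor
          have hq : |(1 - t / b) ^ (k - ν)| ≤ 1 := by
            rw [abs_pow]
            refine pow_le_one₀ (abs_nonneg _) ?_
            rw [abs_le]
            constructor
            · have : t / b ≤ 1 := by rw [div_le_one hb0]; linarith
              linarith
            · have : 0 < t / b := by positivity
              linarith
          have hprod : |∏ j ∈ Finset.range ν, ((k + b - ν + 1 + j) / b)| ≤ (k + 2) ^ ν := by
            rw [Finset.abs_prod]
            have : ∀ j ∈ Finset.range ν, |((k:ℝ) + b - ν + 1 + j) / b| ≤ (k + 2 : ℝ) := by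
              intro j hj
              have hj' : (j : ℝ) ≤ ν - 1 := by
                have := Finset.mem_range.mp hj
                have : (j:ℝ) + 1 ≤ ν := by exact_mod_cast this
                linarith
              have hnum : (0:ℝ) < (k:ℝ) + b - ν + 1 + j := by
                have : (0:ℝ) ≤ (j:ℝ) := Nat.cast_nonneg j
                linarith
              rw [abs_of_nonneg (by positivity)]
              rw [div_le_iff₀ hb0]
              have hbk : (k + 2 : ℝ) * b ≥ k + 1 + b := by nlinarith
              nlinarith
            calc ∏ j ∈ Finset.range ν, |((k:ℝ) + b - ν + 1 + j) / b|
                ≤ ∏ j ∈ Finset.range ν, (k + 2 : ℝ) :=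
                  Finset.prod_le_prod (fun j _ => abs_nonneg _) this
              _ = (k + 2 : ℝ) ^ ν := by rw [Finset.prod_const, Finset.card_range]
          have htpow : |(-t) ^ ν| ≤ (1 + t) ^ k := by
            rw [abs_pow, abs_neg, abs_of_pos ht0]
            calc t ^ ν ≤ (1 + t) ^ ν := pow_le_pow_left₀ ht0.le (by linarith) ν
              _ ≤ (1 + t) ^ k := pow_le_pow_right₀ h1t (Nat.lt_succ_iff.mp (Finset.mem_range.mp hν))
          have habsA : |Real.Gamma (k + a + 1) /
              (Real.Gamma (a + ν + 1) * (Nat.factorial (k - ν)) * (Nat.factorial ν))| = A ν := by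
            rw [abs_div, abs_of_pos hden]
          rw [abs_mul, abs_mul, abs_mul, habsA]
          have hAν : 0 ≤ A ν := by rw [hA]; positivity
          calc A ν * |(-t) ^ ν| * |∏ j ∈ Finset.range ν, ((k + b - ν + 1 + j) / b)| *
                |(1 - t / b) ^ (k - ν)|
              ≤ A ν * (1 + t) ^ k * (k + 2) ^ ν * 1 := by
                refine mul_le_mul (mul_le_mul (mul_le_mul le_rfl htpow (abs_nonneg _) hAν)
                  hprod (abs_nonneg _) (by positivity)) hq (abs_nonneg _) (by positivity)
            _ = A ν * (k + 2) ^ ν * (1 + t) ^ k := by ring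
      _ = (∑ ν ∈ Finset.range (k + 1), A ν * (k + 2) ^ ν) * (1 + t) ^ k := by
          rw [Finset.sum_mul]
      _ ≤ ((∑ ν ∈ Finset.range (k + 1), A ν * (k + 2) ^ ν) + 1) * (1 + t) ^ k := by
          refine mul_le_mul_of_nonneg_right (by linarith) hpow

lemma integral_ofReal_density {ρ : ℝ → ℝ} {s : Set ℝ} (hs : MeasurableSet s)
    (hρ : AEMeasurable ρ (volume.restrict s)) (hpos : ∀ x ∈ s, 0 ≤ ρ x) (g : ℝ → ℝ) :
    ∫ x, g x ∂((volume.restrict s).withDensity fun x => ENNReal.ofReal (ρ x)) =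
      ∫ x in s, g x * ρ x := by
  have hm : AEMeasurable (fun y => (ρ y).toNNReal) (volume.restrict s) :=
    measurable_real_toNNReal.comp_aemeasurable hρ
  rw [show (fun x => ENNReal.ofReal (ρ x)) = (fun x => (((fun y => (ρ y).toNNReal) x : ℝ≥0) : ℝ≥0∞))
    from rfl, integral_withDensity_eq_integral_smul₀ hm g]
  refine setIntegral_congr_fun hs fun x hx => ?_
  simp only [NNReal.smul_def, Real.coe_toNNReal _ (hpos x hx), smul_eq_mul]
  ring

lemma gammaDensity_contOn (a : ℝ) :
    ContinuousOn (fun x : ℝ => x ^ a * Real.exp (-x) / Real.Gamma (a + 1)) (Set.Ioi 0) := by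
  refine ContinuousOn.div_const (ContinuousOn.mul ?_ ?_) _
  · exact continuousOn_id.rpow_const fun x hx => Or.inl (ne_of_gt hx)
  · exact (Real.continuous_exp.comp continuous_neg).continuousOn

lemma integral_gammaMeasure (a : ℝ) (ha : -1 < a) (g : ℝ → ℝ) :
    ∫ x, g x ∂(gammaMeasure a) =
      ∫ t in Set.Ioi (0:ℝ), g t * (t ^ a * Real.exp (-t) / Real.Gamma (a + 1)) := by
  refine integral_ofReal_density measurableSet_Ioi
    ((gammaDensity_contOn a).aemeasurable measurableSet_Ioi) (fun x hx => ?_) g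
  have hx0 : (0:ℝ) < x := hx
  have h1 : (0:ℝ) ≤ x ^ a := Real.rpow_nonneg hx0.le a
  have h2 : (0:ℝ) ≤ Real.exp (-x) := (Real.exp_pos _).le
  have h3 := Real.Gamma_pos_of_pos (by linarith : (0:ℝ) < a + 1)
  positivity

lemma gammaDensity_aemeasurable (a : ℝ) :
    AEMeasurable (fun x : ℝ => ENNReal.ofReal (x ^ a * Real.exp (-x) / Real.Gamma (a + 1)))
      (volume.restrict (Set.Ioi 0)) :=
  ENNReal.measurable_ofReal.comp_aemeasurable
    ((gammaDensity_contOn a).aemeasurable measurableSet_Ioi)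

lemma gammaMeasure_ac (a : ℝ) (ha : -1 < a) :
    volume.restrict (Set.Ioi (0:ℝ)) ≪ gammaMeasure a := by
  refine withDensity_absolutelyContinuous' (gammaDensity_aemeasurable a) ?_
  filter_upwards [ae_restrict_mem measurableSet_Ioi] with x hx
  have hx0 : (0:ℝ) < x := hx
  have h1 := Real.rpow_pos_of_pos hx0 a
  have h2 := Real.exp_pos (-x)
  have h3 := Real.Gamma_pos_of_pos (by linarith : (0:ℝ) < a + 1)
  simp only [ne_eq, ENNReal.ofReal_eq_zero, not_le]
  positivity

lemma gamma_integrable_iff (a : ℝ) (ha : -1 < a) (g : ℝ → ℝ) :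
    Integrable g (gammaMeasure a) ↔ Integrable
      (fun x => ((x ^ a * Real.exp (-x) / Real.Gamma (a + 1)).toNNReal : ℝ) * g x)
      (volume.restrict (Set.Ioi 0)) := by
  unfold gammaMeasure
  rw [show (fun x : ℝ => ENNReal.ofReal (x ^ a * Real.exp (-x) / Real.Gamma (a + 1)))
    = (fun x : ℝ => (((x ^ a * Real.exp (-x) / Real.Gamma (a + 1)).toNNReal : ℝ≥0) : ℝ≥0∞))
    from rfl]
  have hm : AEMeasurable (fun y : ℝ => (y ^ a * Real.exp (-y) / Real.Gamma (a + 1)).toNNReal)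
      (volume.restrict (Set.Ioi 0)) :=
    measurable_real_toNNReal.comp_aemeasurable
      ((gammaDensity_contOn a).aemeasurable measurableSet_Ioi)
  rw [integrable_withDensity_iff_integrable_coe_smul₀ hm]
  simp only [smul_eq_mul]

lemma poly_memLp (a : ℝ) (ha : -1 < a) (k : ℕ) :
    MemLp (fun t : ℝ => (1 + t) ^ k) 2 (gammaMeasure a) := by
  have hΓ : (0:ℝ) < Real.Gamma (a + 1) := Real.Gamma_pos_of_pos (by linarith)
  have hcont : Continuous (fun t : ℝ => ((1 + t) ^ k : ℝ)) := by fun_prop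
  rw [memLp_two_iff_integrable_sq hcont.aestronglyMeasurable]
  have hsq : (fun t : ℝ => ((1 + t) ^ k : ℝ) ^ 2) = fun t : ℝ => ((1 + t) ^ (2 * k) : ℝ) := by
    funext t; rw [← pow_mul, mul_comm]
  rw [hsq, gamma_integrable_iff a ha]
  have hint1 : IntegrableOn (fun x : ℝ => Real.exp (-x) * x ^ ((a + 1) - 1)) (Set.Ioi 0) :=
    Real.GammaIntegral_convergent (by linarith)
  have hint2 : IntegrableOn (fun x : ℝ => Real.exp (-x) * x ^ ((a + 2 * k + 1) - 1))
      (Set.Ioi 0) := by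
    refine Real.GammaIntegral_convergent ?_
    have : (0:ℝ) ≤ 2 * k := by positivity
    linarith
  refine Integrable.mono' ((hint1.add hint2).const_mul ((2:ℝ) ^ (2 * k) / Real.Gamma (a + 1)))
    ?_ ?_
  · refine AEMeasurable.aestronglyMeasurable (AEMeasurable.mul ?_ ?_)
    · exact (measurable_coe_nnreal_real.comp measurable_real_toNNReal).comp_aemeasurable
        ((gammaDensity_contOn a).aemeasurable measurableSet_Ioi)
    · exact (hcont.pow 2).measurable.aemeasurable.congr (by
        refine Eventually.of_forall fun t => ?_
        show ((1 + t) ^ k) ^ 2 = (1 + t) ^ (2 * k)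
        rw [← pow_mul, mul_comm])
  · filter_upwards [ae_restrict_mem measurableSet_Ioi] with t ht
    have ht0 : (0:ℝ) < t := ht
    have h1 : (0:ℝ) ≤ t ^ a := Real.rpow_nonneg ht0.le a
    have h2 := Real.exp_pos (-t)
    have hρ : ((t ^ a * Real.exp (-t) / Real.Gamma (a + 1)).toNNReal : ℝ) =
        t ^ a * Real.exp (-t) / Real.Gamma (a + 1) :=
      Real.coe_toNNReal _ (by positivity)
    rw [Real.norm_eq_abs, hρ, abs_of_nonneg (by positivity)]
    have hbound : ((1 + t) : ℝ) ^ (2 * k) ≤ 2 ^ (2 * k) * (1 + t ^ (2 * k)) := by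
      rcases le_total t 1 with h | h
      · calc ((1 + t) : ℝ) ^ (2 * k) ≤ 2 ^ (2 * k) :=
              pow_le_pow_left₀ (by linarith) (by linarith) _
          _ ≤ 2 ^ (2 * k) * (1 + t ^ (2 * k)) := by
              have h4 : (0:ℝ) ≤ t ^ (2 * k) := by positivity
              nlinarith [pow_pos (by norm_num : (0:ℝ) < 2) (2 * k)]
      · calc ((1 + t) : ℝ) ^ (2 * k) ≤ (2 * t) ^ (2 * k) :=
              pow_le_pow_left₀ (by linarith) (by linarith) _
          _ = 2 ^ (2 * k) * t ^ (2 * k) := by rw [mul_pow]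
          _ ≤ 2 ^ (2 * k) * (1 + t ^ (2 * k)) := by
              have h5 : (0:ℝ) < (2:ℝ) ^ (2 * k) := by positivity
              nlinarith
    have e1 : ((a:ℝ) + 1) - 1 = a := by ring
    have e2 : ((a:ℝ) + 2 * (k:ℕ) + 1) - 1 = a + 2 * k := by push_cast; ring
    have e3 : t ^ (a + 2 * (k:ℕ) : ℝ) = t ^ a * t ^ (2 * k : ℕ) := by
      rw [← Real.rpow_natCast t (2 * k), ← Real.rpow_add ht0]
      push_cast; ring_nf
    have hX : (0:ℝ) ≤ t ^ a * Real.exp (-t) / Real.Gamma (a + 1) := by positivity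
    have hmul := mul_le_mul_of_nonneg_right hbound hX
    calc t ^ a * Real.exp (-t) / Real.Gamma (a + 1) * (1 + t) ^ (2 * k)
        = (1 + t) ^ (2 * k) * (t ^ a * Real.exp (-t) / Real.Gamma (a + 1)) := by ring
      _ ≤ 2 ^ (2 * k) * (1 + t ^ (2 * k)) * (t ^ a * Real.exp (-t) / Real.Gamma (a + 1)) := hmul
      _ = 2 ^ (2 * k) / Real.Gamma (a + 1) *
          (Real.exp (-t) * t ^ ((a + 1) - 1) + Real.exp (-t) * t ^ ((a + 2 * k + 1) - 1)) := by
          rw [e1, e2, e3]; field_simp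

lemma bound_integrable (a : ℝ) (ha : -1 < a) (f : ℝ → ℝ) (hf : MemLp f 2 (gammaMeasure a))
    (k : ℕ) (M : ℝ) :
    Integrable (fun t : ℝ => M * (|f t| * ((1 + t) ^ k * (t ^ a * Real.exp (-t)))))
      (volume.restrict (Set.Ioi 0)) := by
  have hΓ : (0:ℝ) < Real.Gamma (a + 1) := Real.Gamma_pos_of_pos (by linarith)
  have hmul : Integrable (fun t : ℝ => (1 + t) ^ k * f t) (gammaMeasure a) := by
    refine memLp_one_iff_integrable.mp ?_
    have h := (hf.smul (poly_memLp a ha k) (p := 2) (q := 2) (r := 1))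
    exact h
  rw [gamma_integrable_iff a ha] at hmul
  have habs := (hmul.abs.const_mul (M * Real.Gamma (a + 1)))
  refine habs.congr ?_
  filter_upwards [ae_restrict_mem measurableSet_Ioi] with t ht
  have ht0 : (0:ℝ) < t := ht
  have h1 : (0:ℝ) ≤ t ^ a := Real.rpow_nonneg ht0.le a
  have h2 := Real.exp_pos (-t)
  have h3 : (0:ℝ) ≤ (1 + t) ^ k := by positivity
  have hρ : ((t ^ a * Real.exp (-t) / Real.Gamma (a + 1)).toNNReal : ℝ) =
      t ^ a * Real.exp (-t) / Real.Gamma (a + 1) :=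
    Real.coe_toNNReal _ (by positivity)
  rw [hρ, abs_mul, abs_mul, abs_of_nonneg (by positivity :
    (0:ℝ) ≤ t ^ a * Real.exp (-t) / Real.Gamma (a + 1)), abs_of_nonneg h3]
  field_simp

lemma continuous_jacobiP (a b : ℝ) (n : ℕ) : Continuous (jacobiP a b n) := by
  unfold jacobiP
  fun_prop

lemma jacobiDensity_contOn (a b : ℝ) :
    ContinuousOn (fun x : ℝ => (1 - x) ^ a * (1 + x) ^ b *
      (Real.Gamma (a + b + 2) / (2 ^ (a + b + 1) * Real.Gamma (a + 1) * Real.Gamma (b + 1))))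
      (Set.Ioo (-1 : ℝ) 1) := by
  refine ContinuousOn.mul (ContinuousOn.mul ?_ ?_) continuousOn_const
  · exact (continuous_const.sub continuous_id).continuousOn.rpow_const
      fun x hx => Or.inl (by have := hx.2; show (1:ℝ) - x ≠ 0; intro h; linarith [sub_eq_zero.mp h])
  · exact (continuous_const.add continuous_id).continuousOn.rpow_const
      fun x hx => Or.inl (by have := hx.1; show (1:ℝ) + x ≠ 0; intro h; linarith [add_eq_zero_iff_eq_neg.mp h])

lemma cov_s7 (a : ℝ) (ha : -1 < a) (f : ℝ → ℝ) (k : ℕ) {b : ℝ} (hb : 1 ≤ b) :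
    ∫ x, Set.indicator (Set.Icc (-1 : ℝ) 1) (fun y => f (b / 2 * (1 - y))) x *
        jacobiP a b k x ∂jacobiMeasure a b =
    ∫ t in Set.Ioi (0:ℝ), Set.indicator (Set.Ioo (0:ℝ) b)
      (fun t => f t * jacobiP a b k (1 - 2 * t / b) * (t ^ a * (1 - t / b) ^ b) *
        (Real.Gamma (a + b + 2) / (b ^ (a + 1) * Real.Gamma (a + 1) * Real.Gamma (b + 1)))) t := by
  have hb0 : (0:ℝ) < b := by linarith
  have hΓa : (0:ℝ) < Real.Gamma (a + 1) := Real.Gamma_pos_of_pos (by linarith)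
  have hΓb : (0:ℝ) < Real.Gamma (b + 1) := Real.Gamma_pos_of_pos (by linarith)
  have hΓab : (0:ℝ) < Real.Gamma (a + b + 2) := Real.Gamma_pos_of_pos (by linarith)
  have h2ab : (0:ℝ) < (2:ℝ) ^ (a + b + 1) := Real.rpow_pos_of_pos (by norm_num) _
  set c : ℝ := Real.Gamma (a + b + 2) / (2 ^ (a + b + 1) * Real.Gamma (a + 1) * Real.Gamma (b + 1))
    with hc
  have hcpos : 0 < c := by rw [hc]; positivity
  set g : ℝ → ℝ := fun x => f (b / 2 * (1 - x)) * jacobiP a b k x *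
    ((1 - x) ^ a * (1 + x) ^ b * c) with hg
  -- Step 1: unfold jacobiMeasure
  rw [show jacobiMeasure a b = (volume.restrict (Set.Ioo (-1 : ℝ) 1)).withDensity
      (fun x => ENNReal.ofReal ((1 - x) ^ a * (1 + x) ^ b * c)) from rfl]
  rw [integral_ofReal_density measurableSet_Ioo
    ((jacobiDensity_contOn a b).aemeasurable measurableSet_Ioo)
    (fun x hx => by
      have h1 : (0:ℝ) ≤ (1 - x) ^ a := Real.rpow_nonneg (by linarith [hx.2]) a
      have h2 : (0:ℝ) ≤ (1 + x) ^ b := Real.rpow_nonneg (by linarith [hx.1]) b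
      positivity)]
  -- Step 2: kill indicator
  have step2 : ∫ x in Set.Ioo (-1:ℝ) 1,
      Set.indicator (Set.Icc (-1 : ℝ) 1) (fun y => f (b / 2 * (1 - y))) x * jacobiP a b k x *
        ((1 - x) ^ a * (1 + x) ^ b * c) = ∫ x in Set.Ioo (-1:ℝ) 1, g x := by
    refine setIntegral_congr_fun measurableSet_Ioo fun x hx => ?_
    rw [Set.indicator_of_mem (Set.mem_Icc.mpr ⟨hx.1.le, hx.2.le⟩)]
  rw [step2]
  -- Step 3: to interval integral
  rw [← integral_Ioc_eq_integral_Ioo, ← intervalIntegral.integral_of_le (by norm_num : (-1:ℝ) ≤ 1)]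
  -- Step 4: change of variables
  have hcne : -(2 / b) ≠ 0 := by
    simp only [ne_eq, neg_eq_zero, div_eq_zero_iff]
    push_neg
    constructor <;> intro h <;> [norm_num at h; exact absurd h hb0.ne']
  have hcov := intervalIntegral.integral_comp_mul_add (a := (0:ℝ)) (b := b) (f := g) hcne 1
  have he1 : -(2 / b) * 0 + 1 = (1:ℝ) := by ring
  have he2 : -(2 / b) * b + 1 = (-1:ℝ) := by field_simp; ring
  rw [he1, he2] at hcov
  have hinv : (-(2 / b))⁻¹ = -(b / 2) := by field_simp
  rw [hinv, intervalIntegral.integral_symm (-1:ℝ) 1] at hcov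
  have hIb : ∫ x in (-1:ℝ)..1, g x = (2 / b) * ∫ t in (0:ℝ)..b, g (-(2 / b) * t + 1) := by
    rw [hcov]
    simp only [smul_eq_mul]
    field_simp
  rw [hIb]
  -- Step 5: back to set integral over Ioo 0 b
  rw [intervalIntegral.integral_of_le hb0.le, integral_Ioc_eq_integral_Ioo,
    ← integral_const_mul]
  -- Step 6: indicator form
  rw [MeasureTheory.integral_indicator measurableSet_Ioo,
    Measure.restrict_restrict measurableSet_Ioo,
    Set.inter_eq_left.mpr (fun t ht => ht.1)]
  -- Step 7: pointwise identity on Ioo 0 b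
  refine setIntegral_congr_fun measurableSet_Ioo fun t ht => ?_
  obtain ⟨ht0, htb⟩ := ht
  have harg : -(2 / b) * t + 1 = 1 - 2 * t / b := by ring
  rw [harg]
  simp only [hg]
  have harg2 : b / 2 * (1 - (1 - 2 * t / b)) = t := by field_simp; ring
  have h1x : (1:ℝ) - (1 - 2 * t / b) = 2 * t / b := by ring
  have h2x : (1:ℝ) + (1 - 2 * t / b) = 2 * (1 - t / b) := by ring
  rw [harg2, h1x, h2x]
  have hub : (0:ℝ) ≤ 1 - t / b := by
    have : t / b < 1 := (div_lt_one hb0).mpr htb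
    linarith
  have hr1 : (2 * t / b) ^ a = 2 ^ a * t ^ a / b ^ a := by
    rw [show (2 * t / b : ℝ) = (2 * t) / b from rfl,
      Real.div_rpow (by positivity) hb0.le, Real.mul_rpow (by norm_num) ht0.le]
  have hr2 : (2 * (1 - t / b)) ^ b = 2 ^ b * (1 - t / b) ^ b :=
    Real.mul_rpow (by norm_num) hub
  have hr3 : (2:ℝ) ^ (a + b + 1) = 2 ^ a * 2 ^ b * 2 := by
    rw [Real.rpow_add (by norm_num : (0:ℝ) < 2), Real.rpow_add (by norm_num : (0:ℝ) < 2),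
      Real.rpow_one]
  have hr4 : (b:ℝ) ^ (a + 1) = b ^ a * b := by
    rw [Real.rpow_add hb0, Real.rpow_one]
  rw [hr1, hr2, hc, hr3, hr4]
  have h2a : (0:ℝ) < (2:ℝ) ^ a := Real.rpow_pos_of_pos (by norm_num) _
  have h2b : (0:ℝ) < (2:ℝ) ^ b := Real.rpow_pos_of_pos (by norm_num) _
  have hba : (0:ℝ) < b ^ a := Real.rpow_pos_of_pos hb0 _
  field_simp

/-- Inner product relation: `⟨f_β, P_k^{(α,β)}⟩_{μ_{α,β}} → ⟨f, L_k^α⟩_{μ_α}` as `β → ∞`. -/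
theorem stmt_7 (a : ℝ) (ha : -1 < a) (f : ℝ → ℝ) (hf : MemLp f 2 (gammaMeasure a)) (k : ℕ) :
    Tendsto (fun b : ℝ =>
        ∫ x, Set.indicator (Set.Icc (-1 : ℝ) 1) (fun y => f (b / 2 * (1 - y))) x *
          jacobiP a b k x ∂jacobiMeasure a b)
      atTop (nhds (∫ x, f x * laguerreL a k x ∂gammaMeasure a)) := by
  have hΓa : (0:ℝ) < Real.Gamma (a + 1) := Real.Gamma_pos_of_pos (by linarith)
  set d : ℝ → ℝ := fun b =>
    Real.Gamma (a + b + 2) / (b ^ (a + 1) * Real.Gamma (a + 1) * Real.Gamma (b + 1)) with hd_def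
  set ψ : ℝ → ℝ → ℝ := fun b t =>
    f t * jacobiP a b k (1 - 2 * t / b) * (t ^ a * (1 - t / b) ^ b) * d b with hψ_def
  -- limit of d
  have hd : Tendsto d atTop (nhds (1 / Real.Gamma (a + 1))) := by
    have h1 : Tendsto (fun b : ℝ =>
        Real.Gamma ((b + 1) + (a + 1)) / (Real.Gamma (b + 1) * (b + 1) ^ (a + 1)))
        atTop (nhds 1) :=
      (tendsto_Gamma_ratio (by linarith : (0:ℝ) < a + 1)).comp
        (tendsto_atTop_add_const_right atTop 1 tendsto_id)
    have h2 : Tendsto (fun b : ℝ => ((b + 1) / b) ^ (a + 1)) atTop (nhds 1) := by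
      have := (tendsto_ratio1 1).rpow_const (p := a + 1) (Or.inl one_ne_zero)
      simpa using this
    have h3 := (h1.mul h2).mul (tendsto_const_nhds (x := 1 / Real.Gamma (a + 1)) (f := atTop))
    rw [mul_one, one_mul] at h3
    refine h3.congr' ?_
    filter_upwards [eventually_gt_atTop 0] with b hb0
    have he : (b:ℝ) + 1 + (a + 1) = a + b + 2 := by ring
    rw [he]
    have hΓb : (0:ℝ) < Real.Gamma (b + 1) := Real.Gamma_pos_of_pos (by linarith)
    have hb1 : (0:ℝ) < (b + 1) ^ (a + 1) := Real.rpow_pos_of_pos (by linarith) _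
    have hba : (0:ℝ) < b ^ (a + 1) := Real.rpow_pos_of_pos hb0 _
    have hdiv : ((b + 1) / b) ^ (a + 1) = (b + 1) ^ (a + 1) / b ^ (a + 1) :=
      Real.div_rpow (by linarith) hb0.le _
    rw [hdiv, hd_def]
    field_simp
  obtain ⟨C, hC, hCb⟩ := jacobiP_bound a ha k
  set D : ℝ := 1 / Real.Gamma (a + 1) + 1 with hD_def
  have hD0 : 0 < D := by positivity
  have hdD : ∀ᶠ b in atTop, d b ≤ D := hd.eventually_le_const (by rw [hD_def]; linarith)
  -- rewrite the target integral
  rw [integral_gammaMeasure a ha (fun x => f x * laguerreL a k x)]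
  -- DCT
  have hfm : AEStronglyMeasurable f (volume.restrict (Set.Ioi (0:ℝ))) :=
    AEStronglyMeasurable.mono_ac (gammaMeasure_ac a ha) hf.1
  have key : Tendsto (fun b : ℝ => ∫ t in Set.Ioi (0:ℝ),
      Set.indicator (Set.Ioo (0:ℝ) b) (ψ b) t) atTop
      (nhds (∫ t in Set.Ioi (0:ℝ),
        f t * laguerreL a k t * (t ^ a * Real.exp (-t) / Real.Gamma (a + 1)))) := by
    refine tendsto_integral_filter_of_dominated_convergence
      (bound := fun t => C * D * (|f t| * ((1 + t) ^ k * (t ^ a * Real.exp (-t))))) ?_ ?_ ?_ ?_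
    · -- measurability
      filter_upwards [eventually_gt_atTop 0] with b hb0
      rw [aestronglyMeasurable_indicator_iff measurableSet_Ioo,
        Measure.restrict_restrict measurableSet_Ioo,
        Set.inter_eq_left.mpr (fun t ht => ht.1)]
      have hsub : Set.Ioo (0:ℝ) b ⊆ Set.Ioi 0 := fun t ht => ht.1
      have hf' : AEStronglyMeasurable f (volume.restrict (Set.Ioo (0:ℝ) b)) :=
        hfm.mono_measure (Measure.restrict_mono hsub le_rfl)
      have hP : AEStronglyMeasurable (fun t : ℝ => jacobiP a b k (1 - 2 * t / b))
          (volume.restrict (Set.Ioo (0:ℝ) b)) :=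
        ((continuous_jacobiP a b k).comp (by fun_prop)).aestronglyMeasurable
      have hpow : AEStronglyMeasurable (fun t : ℝ => t ^ a * (1 - t / b) ^ b)
          (volume.restrict (Set.Ioo (0:ℝ) b)) := by
        refine ((ContinuousOn.mul ?_ ?_).aemeasurable measurableSet_Ioo).aestronglyMeasurable
        · exact continuousOn_id.rpow_const fun t ht => Or.inl (ne_of_gt ht.1)
        · refine (continuous_const.sub (continuous_id.div_const b)).continuousOn.rpow_const
            fun t ht => Or.inl ?_
          have h1 : t / b < 1 := (div_lt_one (by linarith [ht.1, ht.2])).mpr ht.2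
          simp only [id]
          intro h
          change (1:ℝ) - t / b = 0 at h
          rw [sub_eq_zero] at h
          linarith
      exact ((hf'.mul hP).mul hpow).mul aestronglyMeasurable_const
    · -- domination
      filter_upwards [eventually_ge_atTop 1, hdD] with b hb1 hbD
      filter_upwards [ae_restrict_mem measurableSet_Ioi] with t ht
      have ht0 : (0:ℝ) < t := ht
      have hta : (0:ℝ) ≤ t ^ a := Real.rpow_nonneg ht0.le a
      have hexp := Real.exp_pos (-t)
      have hbnd0 : (0:ℝ) ≤ C * D * (|f t| * ((1 + t) ^ k * (t ^ a * Real.exp (-t)))) := by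
        have h1 : (0:ℝ) ≤ (1 + t) ^ k := by positivity
        positivity
      by_cases hmem : t ∈ Set.Ioo (0:ℝ) b
      · rw [Set.indicator_of_mem hmem, hψ_def]
        obtain ⟨_, htb⟩ := hmem
        have hb0 : (0:ℝ) < b := by linarith
        have hub : (0:ℝ) ≤ 1 - t / b := by
          have : t / b < 1 := (div_lt_one hb0).mpr htb
          linarith
        have hrpow : (0:ℝ) ≤ (1 - t / b) ^ b := Real.rpow_nonneg hub b
        have hP : |jacobiP a b k (1 - 2 * t / b)| ≤ C * (1 + t) ^ k :=
          hCb b hb1 t ⟨ht0, htb⟩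
        have hexpb : (1 - t / b) ^ b ≤ Real.exp (-t) := by
          have h1 : 1 - t / b ≤ Real.exp (-(t / b)) := by
            have := Real.add_one_le_exp (-(t / b))
            linarith
          have h2 : (1 - t / b) ^ b ≤ (Real.exp (-(t / b))) ^ b :=
            Real.rpow_le_rpow hub h1 hb0.le
          have h3 : (Real.exp (-(t / b))) ^ b = Real.exp (-t) := by
            rw [← Real.exp_mul]
            congr 1
            field_simp
          rwa [h3] at h2
        have hd0 : 0 ≤ d b := by
          rw [hd_def]
          have h1 : (0:ℝ) < Real.Gamma (a + b + 2) := Real.Gamma_pos_of_pos (by linarith)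
          have h2 : (0:ℝ) < b ^ (a + 1) := Real.rpow_pos_of_pos hb0 _
          have h3 : (0:ℝ) < Real.Gamma (b + 1) := Real.Gamma_pos_of_pos (by linarith)
          positivity
        rw [Real.norm_eq_abs, abs_mul, abs_mul, abs_mul, abs_of_nonneg hd0,
          abs_of_nonneg (mul_nonneg hta hrpow)]
        have hXle : t ^ a * (1 - t / b) ^ b ≤ t ^ a * Real.exp (-t) :=
          mul_le_mul_of_nonneg_left hexpb hta
        calc |f t| * |jacobiP a b k (1 - 2 * t / b)| * (t ^ a * (1 - t / b) ^ b) * d b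
            ≤ |f t| * (C * (1 + t) ^ k) * (t ^ a * Real.exp (-t)) * D := by
              refine mul_le_mul (mul_le_mul (mul_le_mul le_rfl hP (abs_nonneg _)
                (abs_nonneg _)) hXle (mul_nonneg hta hrpow)
                (by positivity)) hbD hd0 ?_
              have h1 : (0:ℝ) ≤ (1 + t) ^ k := by positivity
              positivity
          _ = C * D * (|f t| * ((1 + t) ^ k * (t ^ a * Real.exp (-t)))) := by ring
      · rw [Set.indicator_of_notMem hmem]
        simpa using hbnd0
    · exact bound_integrable a ha f hf k (C * D)
    · -- pointwise limit
      filter_upwards [ae_restrict_mem measurableSet_Ioi] with t ht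
      have ht0 : (0:ℝ) < t := ht
      have hexp : Tendsto (fun b : ℝ => (1 - t / b) ^ b) atTop (nhds (Real.exp (-t))) := by
        have h := tendsto_one_add_div_rpow_exp (-t)
        refine h.congr fun b => ?_
        rw [neg_div, ← sub_eq_add_neg]
      have hmain : Tendsto (fun b : ℝ => ψ b t) atTop
          (nhds (f t * laguerreL a k t * (t ^ a * Real.exp (-t)) * (1 / Real.Gamma (a + 1)))) :=
        ((tendsto_const_nhds.mul (jacobiP_tendsto a k t)).mul
          (tendsto_const_nhds.mul hexp)).mul hd
      have heq : f t * laguerreL a k t * (t ^ a * Real.exp (-t)) * (1 / Real.Gamma (a + 1)) =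
          f t * laguerreL a k t * (t ^ a * Real.exp (-t) / Real.Gamma (a + 1)) := by ring
      rw [heq] at hmain
      refine hmain.congr' ?_
      filter_upwards [eventually_gt_atTop t] with b hbt
      rw [Set.indicator_of_mem (Set.mem_Ioo.mpr ⟨ht0, hbt⟩)]
  refine key.congr' ?_
  filter_upwards [eventually_ge_atTop 1] with b hb1
  exact (cov_s7 a ha f k hb1).symm

end
end

section
/- Fix α > −1. Let f ∈ L²((0,∞), μ_α) and for β > 0 set f_β(x) = f((β/2)(1−x))·1_{[−1,1]}(x). Then ‖f_β‖²_{L²(μ_{α,β})} ≤ [Γ(α+β+2)/(Γ(β+1)β^{α+1})] · ‖f‖²_{L²(μ_α)}; in particular f_β ∈ L²((−1,1), μ_{α,β}). -/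
open MeasureTheory Filter Real
open scoped ENNReal NNReal

noncomputable section

lemma map_withDensity_measEquiv (e : ℝ ≃ᵐ ℝ) (μ : Measure ℝ) {w : ℝ → ℝ≥0∞} (hw : Measurable w) :
    Measure.map e (μ.withDensity w) = (Measure.map e μ).withDensity (fun y => w (e.symm y)) := by
  ext s hs
  rw [Measure.map_apply e.measurable hs, withDensity_apply _ (e.measurable hs),
    withDensity_apply _ hs]
  have h := setLIntegral_map (μ := μ) (f := fun y => w (e.symm y)) hs
    (hw.comp e.symm.measurable) e.measurable
  simp only [MeasurableEquiv.symm_apply_apply] at h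
  exact h.symm

/-- Quantitative bound: `‖f_β‖²_{L²(μ_{α,β})} ≤ [Γ(α+β+2)/(Γ(β+1)β^{α+1})] ‖f‖²_{L²(μ_α)}`. -/
theorem stmt_11 (a : ℝ) (ha : -1 < a) (f : ℝ → ℝ) (hf : MemLp f 2 (gammaMeasure a))
    (b : ℝ) (hb : 0 < b) :
    MemLp (Set.indicator (Set.Icc (-1 : ℝ) 1) fun x => f (b / 2 * (1 - x))) 2
        (jacobiMeasure a b) ∧
      (∫ x, Set.indicator (Set.Icc (-1 : ℝ) 1) (fun y => f (b / 2 * (1 - y))) x ^ 2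
          ∂jacobiMeasure a b) ≤
        Real.Gamma (a + b + 2) / (Real.Gamma (b + 1) * b ^ (a + 1)) *
          ∫ x, f x ^ 2 ∂gammaMeasure a := by
  have hb2 : (b / 2 : ℝ) ≠ 0 := by positivity
  have hb2' : (-(b / 2) : ℝ) ≠ 0 := neg_ne_zero.mpr hb2
  set c : ℝ := Real.Gamma (a + b + 2) / (Real.Gamma (b + 1) * b ^ (a + 1)) with hc_def
  have hΓa : 0 < Real.Gamma (a + 1) := Real.Gamma_pos_of_pos (by linarith)
  have hΓb : 0 < Real.Gamma (b + 1) := Real.Gamma_pos_of_pos (by linarith)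
  have hΓab : 0 < Real.Gamma (a + b + 2) := Real.Gamma_pos_of_pos (by linarith)
  have hba : (0 : ℝ) < b ^ (a + 1) := Real.rpow_pos_of_pos hb _
  have h2a : (0 : ℝ) < 2 ^ a := Real.rpow_pos_of_pos two_pos _
  have h2b : (0 : ℝ) < 2 ^ b := Real.rpow_pos_of_pos two_pos _
  have hbapos : (0 : ℝ) < b ^ a := Real.rpow_pos_of_pos hb _
  have hc_pos : 0 < c := by positivity
  -- the affine measurable equivalence
  set e : ℝ ≃ᵐ ℝ :=
    ((Homeomorph.mulLeft₀ (-(b / 2)) hb2').trans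
      (Homeomorph.addLeft (b / 2))).toMeasurableEquiv with he_def
  have he : ∀ x, e x = b / 2 * (1 - x) := by
    intro x
    show b / 2 + -(b / 2) * x = b / 2 * (1 - x)
    ring
  have hes : ∀ y, e.symm y = 1 - 2 * y / b := by
    intro y
    apply e.injective
    rw [MeasurableEquiv.apply_symm_apply, he]
    field_simp
    ring
  -- densities
  set C : ℝ := Real.Gamma (a + b + 2) / (2 ^ (a + b + 1) * Real.Gamma (a + 1) * Real.Gamma (b + 1))
    with hC_def
  set w : ℝ → ℝ≥0∞ := fun x => ENNReal.ofReal ((1 - x) ^ a * (1 + x) ^ b * C) with hw_def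
  have hw : Measurable w := by fun_prop
  set wγ : ℝ → ℝ≥0∞ := fun x => ENNReal.ofReal (x ^ a * Real.exp (-x) / Real.Gamma (a + 1))
    with hwγ_def
  have hwγ : Measurable wγ := by fun_prop
  have h2ab : (2 : ℝ) ^ (a + b + 1) = 2 ^ a * 2 ^ b * 2 := by
    rw [show a + b + 1 = a + (b + 1) by ring, Real.rpow_add two_pos,
      Real.rpow_add_one (by norm_num) b, mul_assoc]
  have hba1 : b ^ (a + 1) = b ^ a * b := Real.rpow_add_one hb.ne' a
  -- key: the pushforward of the Jacobi measure is dominated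
  have hmap : Measure.map e (jacobiMeasure a b) ≤ ENNReal.ofReal c • gammaMeasure a := by
    have h1 : jacobiMeasure a b = volume.withDensity ((Set.Ioo (-1 : ℝ) 1).indicator w) := by
      rw [withDensity_indicator measurableSet_Ioo]; rfl
    have h2 : Measure.map e volume = ENNReal.ofReal (2 / b) • volume := by
      have hfe : (⇑e : ℝ → ℝ) = (fun z => b / 2 + z) ∘ (fun x => -(b / 2) * x) := rfl
      rw [hfe, ← Measure.map_map (measurable_const_add _) (measurable_const_mul _),
        Real.map_volume_mul_left hb2', Measure.map_smul, map_add_left_eq_self volume (b / 2)]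
      congr 1
      rw [abs_inv, abs_neg, abs_of_pos (by positivity : (0:ℝ) < b / 2)]
      norm_num
    have h3 : Measure.map e (jacobiMeasure a b) =
        volume.withDensity (fun y =>
          ENNReal.ofReal (2 / b) * (Set.Ioo (-1 : ℝ) 1).indicator w (e.symm y)) := by
      rw [h1, map_withDensity_measEquiv e volume (hw.indicator measurableSet_Ioo), h2,
        withDensity_smul_measure]
      exact (withDensity_smul _ (show Measurable fun y =>
        (Set.Ioo (-1 : ℝ) 1).indicator w (e.symm y) from
        (hw.indicator measurableSet_Ioo).comp e.symm.measurable)).symm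
    have h4 : ENNReal.ofReal c • gammaMeasure a =
        volume.withDensity (fun y =>
          ENNReal.ofReal c * (Set.Ioi (0 : ℝ)).indicator wγ y) := by
      have hg : gammaMeasure a = volume.withDensity ((Set.Ioi (0 : ℝ)).indicator wγ) := by
        rw [withDensity_indicator measurableSet_Ioi]; rfl
      rw [hg]
      exact (withDensity_smul _ (hwγ.indicator measurableSet_Ioi)).symm
    rw [h3, h4]
    refine withDensity_mono (Filter.Eventually.of_forall fun y => ?_)
    dsimp only
    by_cases hy : e.symm y ∈ Set.Ioo (-1 : ℝ) 1
    · have hy' := hy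
      rw [hes, Set.mem_Ioo] at hy'
      obtain ⟨hy1, hy2⟩ := hy'
      have hkey : 2 * y / b * b = 2 * y := div_mul_cancel₀ _ hb.ne'
      have hy0 : 0 < y := by
        have h' := mul_pos (show (0 : ℝ) < 2 * y / b by linarith) hb
        rw [hkey] at h'; linarith
      have hyb : y < b := by
        have h' := mul_lt_mul_of_pos_right (show 2 * y / b < 2 by linarith) hb
        rw [hkey] at h'; linarith
      have h1yb : (0 : ℝ) ≤ 1 - y / b := by
        rw [sub_nonneg]; exact (div_le_one hb).mpr hyb.le
      rw [Set.indicator_of_mem hy, Set.indicator_of_mem (Set.mem_Ioi.mpr hy0), hes]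
      rw [hw_def, hwγ_def]
      rw [← ENNReal.ofReal_mul (by positivity : (0:ℝ) ≤ 2 / b),
        ← ENNReal.ofReal_mul hc_pos.le]
      apply ENNReal.ofReal_le_ofReal
      have ea : 1 - (1 - 2 * y / b) = 2 / b * y := by ring
      have eb : 1 + (1 - 2 * y / b) = 2 * (1 - y / b) := by ring
      rw [ea, eb, Real.mul_rpow (by positivity) hy0.le,
        Real.mul_rpow (by norm_num) h1yb,
        Real.div_rpow (by norm_num) hb.le]
      have hexp : (1 - y / b) ^ b ≤ Real.exp (-y) := by
        have h1 : 1 - y / b ≤ Real.exp (-(y / b)) := by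
          linarith [Real.add_one_le_exp (-(y / b))]
        have h2 := Real.rpow_le_rpow h1yb h1 hb.le
        rwa [← Real.exp_mul, show -(y / b) * b = -y by field_simp] at h2
      calc 2 / b * (2 ^ a / b ^ a * y ^ a * (2 ^ b * (1 - y / b) ^ b) * C)
          = Real.Gamma (a + b + 2) / (Real.Gamma (a + 1) * Real.Gamma (b + 1) * (b ^ a * b)) *
            (y ^ a * (1 - y / b) ^ b) := by
            rw [hC_def, h2ab]; field_simp
        _ ≤ Real.Gamma (a + b + 2) / (Real.Gamma (a + 1) * Real.Gamma (b + 1) * (b ^ a * b)) *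
            (y ^ a * Real.exp (-y)) := by
            gcongr
        _ = c * (y ^ a * Real.exp (-y) / Real.Gamma (a + 1)) := by
            rw [hc_def, hba1]; field_simp
    · rw [Set.indicator_of_notMem hy, mul_zero]
      exact zero_le
  -- consequences of domination
  have hmap_ac : Measure.map e (jacobiMeasure a b) ≪ gammaMeasure a :=
    Measure.absolutelyContinuous_of_le_smul hmap
  have hfae : AEStronglyMeasurable f (Measure.map e (jacobiMeasure a b)) :=
    hf.1.mono_ac hmap_ac
  have hIoo : ∀ᵐ x ∂(jacobiMeasure a b), x ∈ Set.Ioo (-1 : ℝ) 1 := by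
    have h := withDensity_absolutelyContinuous (volume.restrict (Set.Ioo (-1 : ℝ) 1)) w
    exact h.ae_le (ae_restrict_mem measurableSet_Ioo)
  set g : ℝ → ℝ := Set.indicator (Set.Icc (-1 : ℝ) 1) fun x => f (b / 2 * (1 - x)) with hg_def
  have hg_ae : g =ᵐ[jacobiMeasure a b] (f ∘ ⇑e) := by
    filter_upwards [hIoo] with x hx
    have hx' : x ∈ Set.Icc (-1 : ℝ) 1 := Set.mem_Icc_of_Ioo hx
    rw [hg_def, Set.indicator_of_mem hx', Function.comp_apply, he]
  have hmemf : MemLp f 2 (Measure.map e (jacobiMeasure a b)) :=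
    (hf.smul_measure ENNReal.ofReal_ne_top).mono_measure hmap
  have hmem : MemLp (f ∘ ⇑e) 2 (jacobiMeasure a b) :=
    hmemf.comp_of_map e.measurable.aemeasurable
  have hmemg : MemLp g 2 (jacobiMeasure a b) := hmem.ae_eq hg_ae.symm
  refine ⟨hmemg, ?_⟩
  -- integrals
  have hsq_ae : AEStronglyMeasurable (fun y => f y ^ 2) (Measure.map e (jacobiMeasure a b)) :=
    (hfae.aemeasurable.pow_const 2).aestronglyMeasurable
  have hsq_γ : AEStronglyMeasurable (fun y => f y ^ 2) (gammaMeasure a) :=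
    (hf.1.aemeasurable.pow_const 2).aestronglyMeasurable
  have hint1 : ∫ x, g x ^ 2 ∂(jacobiMeasure a b) =
      ∫ x, f (e x) ^ 2 ∂(jacobiMeasure a b) :=
    integral_congr_ae (hg_ae.mono fun x hx => by dsimp only; rw [hx]; rfl)
  have hint2 : ∫ x, f (e x) ^ 2 ∂(jacobiMeasure a b) =
      ∫ y, f y ^ 2 ∂(Measure.map e (jacobiMeasure a b)) :=
    (integral_map e.measurable.aemeasurable hsq_ae).symm
  set F : ℝ → ℝ≥0∞ := fun y => ENNReal.ofReal (f y ^ 2) with hF_def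
  have hlint : ∫⁻ y, F y ∂(Measure.map e (jacobiMeasure a b)) ≤
      ENNReal.ofReal c * ∫⁻ y, F y ∂(gammaMeasure a) := by
    calc ∫⁻ y, F y ∂(Measure.map e (jacobiMeasure a b))
        ≤ ∫⁻ y, F y ∂(ENNReal.ofReal c • gammaMeasure a) := lintegral_mono' hmap le_rfl
      _ = ENNReal.ofReal c * ∫⁻ y, F y ∂(gammaMeasure a) := lintegral_smul_measure _ _
  have hLγ : ∫⁻ y, F y ∂(gammaMeasure a) ≠ ∞ := by
    have hi := hf.integrable_sq
    have h2 := hi.2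
    rw [HasFiniteIntegral] at h2
    have heq : ∀ y, F y = ‖f y ^ 2‖ₑ := fun y =>
      (Real.enorm_eq_ofReal (sq_nonneg _)).symm
    rw [show (fun y => F y) = fun y => ‖f y ^ 2‖ₑ from funext heq]
    exact h2.ne
  have heq1 : ∫ y, f y ^ 2 ∂(Measure.map e (jacobiMeasure a b)) =
      (∫⁻ y, F y ∂(Measure.map e (jacobiMeasure a b))).toReal :=
    integral_eq_lintegral_of_nonneg_ae (Eventually.of_forall fun y => sq_nonneg _) hsq_ae
  have heq2 : ∫ y, f y ^ 2 ∂(gammaMeasure a) =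
      (∫⁻ y, F y ∂(gammaMeasure a)).toReal :=
    integral_eq_lintegral_of_nonneg_ae (Eventually.of_forall fun y => sq_nonneg _) hsq_γ
  rw [hint1, hint2, heq1, heq2]
  have hfin : ENNReal.ofReal c * ∫⁻ y, F y ∂(gammaMeasure a) ≠ ∞ :=
    ENNReal.mul_ne_top ENNReal.ofReal_ne_top hLγ
  have hmono := ENNReal.toReal_mono hfin hlint
  rwa [ENNReal.toReal_mul, ENNReal.toReal_ofReal hc_pos.le] at hmono

end
end
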